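/- arXiv:2106.11350 — 4 statements merged into one kernel-verified Lean document; each statement's English description precedes it below -/
import Mathlib

section
/- Fix continuous matrix functions A(t), B(t), R(t) on [0,1] with B, R symmetric. Let V be the space of solutions (p,x) of ṗ = -Aᵀp + Rx, ẋ = Bp + Ax with x(0) = 0, and W ⊆ V the subspace with additionally x(1) = 0. Define subspaces of ℝⁿ: A₁ := {x(1) : (p,x) ∈ V} and B₁ := {p(1) : (p,x) ∈ W}. Then ℝⁿ = A₁ ⊕ B₁ and B₁ is the orthogonal complement of A₁ with respect to the Euclidean inner product. -/
open Matrix Set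

/-- A pair `(p, x)` is a solution on `[0,1]` of Hamilton's equation for
Jacobi fields `ṗ = -Aᵀp + Rx, ẋ = Bp + Ax`. -/
def IsJacobiSol (n : ℕ) (A B R : ℝ → Matrix (Fin n) (Fin n) ℝ)
    (p x : ℝ → Fin n → ℝ) : Prop :=
  ∀ t ∈ Icc (0:ℝ) 1,
    HasDerivWithinAt p ((-(A t)ᵀ).mulVec (p t) + (R t).mulVec (x t)) (Icc 0 1) t ∧
    HasDerivWithinAt x ((B t).mulVec (p t) + (A t).mulVec (x t)) (Icc 0 1) t

/-- `A₁ = {x(1) : (p,x) solution with x(0) = 0}`. -/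
def Aone (n : ℕ) (A B R : ℝ → Matrix (Fin n) (Fin n) ℝ) : Set (Fin n → ℝ) :=
  {v | ∃ p x : ℝ → Fin n → ℝ, IsJacobiSol n A B R p x ∧ x 0 = 0 ∧ x 1 = v}

/-- `B₁ = {p(1) : (p,x) solution with x(0) = x(1) = 0}`. -/
def Bone (n : ℕ) (A B R : ℝ → Matrix (Fin n) (Fin n) ℝ) : Set (Fin n → ℝ) :=
  {w | ∃ p x : ℝ → Fin n → ℝ, IsJacobiSol n A B R p x ∧ x 0 = 0 ∧ x 1 = 0 ∧ p 1 = w}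




section ODE

variable {E : Type*} [NormedAddCommGroup E] [NormedSpace ℝ E] [CompleteSpace E]
  {M : ℝ → E →L[ℝ] E}

/-- Short-time existence for a linear ODE. -/
lemma linODE_short (hM : Continuous M) {K : ℝ} (hK : 0 < K)
    (hbd : ∀ t ∈ Icc (0:ℝ) 1, ‖M t‖ ≤ K)
    {a b : ℝ} (hab : a ≤ b) (hsub : Icc a b ⊆ Icc 0 1)
    (hlen : b - a ≤ 1 / (2*K)) (z₀ : E) :
    ∃ f : ℝ → E, f a = z₀ ∧ ∀ t ∈ Icc a b, HasDerivWithinAt f (M t (f t)) (Icc a b) t := by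
  have hmem : a ∈ Icc a b := ⟨le_rfl, hab⟩
  have hpl : IsPicardLindelof (fun t z => M t z) (⟨a, hmem⟩ : Icc a b) z₀ (‖z₀‖+1).toNNReal 0
      (K*(2*‖z₀‖+1)).toNNReal K.toNNReal :=
    { lipschitzOnWith := by
        intro t ht
        apply LipschitzWith.lipschitzOnWith
        apply (M t).lipschitz.weaken
        rw [← norm_toNNReal]
        exact Real.toNNReal_mono (hbd t (hsub ht))
      continuousOn := fun z _ => (hM.clm_apply continuous_const).continuousOn
      norm_le := by
        intro t ht z hz
        rw [Metric.mem_closedBall, dist_eq_norm] at hz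
        rw [Real.coe_toNNReal _ (by positivity)] at hz ⊢
        have h1 : ‖z‖ - ‖z₀‖ ≤ ‖z - z₀‖ := norm_sub_norm_le z z₀
        have h2 := (M t).le_opNorm z
        have h3 := hbd t (hsub ht)
        have h4 : (0:ℝ) ≤ ‖z‖ := norm_nonneg z
        have h5 : (0:ℝ) ≤ ‖M t‖ := norm_nonneg _
        nlinarith
      mul_max_le := by
        have hmax : max (b - a) (a - a) = b - a := by
          rw [sub_self]; exact max_eq_left (by linarith)
        show ((K*(2*‖z₀‖+1)).toNNReal : ℝ) * max (b - a) (a - a) ≤ ((‖z₀‖+1).toNNReal : ℝ) - ((0:NNReal) : ℝ)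
        rw [NNReal.coe_zero, sub_zero, Real.coe_toNNReal _ (by positivity), Real.coe_toNNReal _ (by positivity)]
        rw [hmax]
        have h2 : K * (b - a) ≤ K * (1/(2*K)) := by
          apply mul_le_mul_of_nonneg_left hlen hK.le
        have h3 : K * (1/(2*K)) = 1/2 := by field_simp
        have h4 : (0:ℝ) ≤ ‖z₀‖ := norm_nonneg z₀
        nlinarith [mul_le_mul_of_nonneg_left (h3 ▸ h2) (by linarith : (0:ℝ) ≤ 2*‖z₀‖+1)] }
  obtain ⟨f, h0, hf⟩ := hpl.exists_eq_forall_mem_Icc_hasDerivWithinAt₀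
  exact ⟨f, h0, hf⟩

/-- Gluing two solutions at a common point. -/
lemma glue_sol {g : ℝ → E → E} {a m b : ℝ} (ham : a ≤ m) (hmb : m ≤ b) {f₁ f₂ : ℝ → E}
    (h₁ : ∀ t ∈ Icc a m, HasDerivWithinAt f₁ (g t (f₁ t)) (Icc a m) t)
    (h₂ : ∀ t ∈ Icc m b, HasDerivWithinAt f₂ (g t (f₂ t)) (Icc m b) t)
    (heq : f₁ m = f₂ m) :
    ∃ f : ℝ → E, f a = f₁ a ∧ ∀ t ∈ Icc a b, HasDerivWithinAt f (g t (f t)) (Icc a b) t := by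
  classical
  refine ⟨fun t => if t ≤ m then f₁ t else f₂ t, by simp [ham], fun t ht => ?_⟩
  set f : ℝ → E := fun t => if t ≤ m then f₁ t else f₂ t with hfdef
  have hf1 : EqOn f f₁ (Icc a m) := fun s hs => if_pos hs.2
  have hf2 : EqOn f f₂ (Icc m b) := by
    intro s hs
    by_cases h : s ≤ m
    · have hsm : s = m := le_antisymm h hs.1
      simp [hfdef, hsm, heq]
    · simp [hfdef, h]
  have d1 : HasDerivWithinAt f (g t (f t)) (Icc a m) t := by
    by_cases hc : t ≤ m
    · have ht1 : t ∈ Icc a m := ⟨ht.1, hc⟩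
      have := (h₁ t ht1).congr (fun y hy => hf1 hy) (hf1 ht1)
      rwa [← hf1 ht1] at this
    · exact HasFDerivWithinAt.of_notMem_closure (by rw [closure_Icc]; exact fun hmem => hc hmem.2)
  have d2 : HasDerivWithinAt f (g t (f t)) (Icc m b) t := by
    by_cases hc : m ≤ t
    · have ht2 : t ∈ Icc m b := ⟨hc, ht.2⟩
      have := (h₂ t ht2).congr (fun y hy => hf2 hy) (hf2 ht2)
      rwa [← hf2 ht2] at this
    · exact HasFDerivWithinAt.of_notMem_closure (by rw [closure_Icc]; exact fun hmem => hc hmem.1)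
  have := d1.union d2
  rwa [Icc_union_Icc_eq_Icc ham hmb] at this

lemma linODE_exists_aux (hM : Continuous M) {K : ℝ} (hK : 0 < K)
    (hbd : ∀ t ∈ Icc (0:ℝ) 1, ‖M t‖ ≤ K) :
    ∀ k : ℕ, ∀ a b : ℝ, a ∈ Icc (0:ℝ) 1 → b ∈ Icc (0:ℝ) 1 → a ≤ b →
      b - a ≤ k * (1/(2*K)) → ∀ z₀ : E,
      ∃ f : ℝ → E, f a = z₀ ∧ ∀ t ∈ Icc a b, HasDerivWithinAt f (M t (f t)) (Icc a b) t := by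
  intro k
  induction k with
  | zero =>
    intro a b ha hb hab hlen z₀
    refine linODE_short hM hK hbd hab (Icc_subset_Icc ha.1 hb.2) ?_ z₀
    have : (0:ℝ) < 1/(2*K) := by positivity
    simp only [Nat.cast_zero, zero_mul] at hlen
    linarith
  | succ k ih =>
    intro a b ha hb hab hlen z₀
    by_cases hc : b - a ≤ 1/(2*K)
    · exact linODE_short hM hK hbd hab (Icc_subset_Icc ha.1 hb.2) hc z₀
    · push_neg at hc
      have hδpos : (0:ℝ) < 1/(2*K) := by positivity
      set m := a + 1/(2*K) with hm
      have ham : a ≤ m := by simp [hm]; positivity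
      have hmb : m ≤ b := by simp only [hm]; linarith
      have hmI : m ∈ Icc (0:ℝ) 1 := ⟨by linarith [ha.1], le_trans hmb hb.2⟩
      obtain ⟨f₁, hf₁0, hf₁⟩ := linODE_short hM hK hbd ham
        (Icc_subset_Icc ha.1 hmI.2) (by simp [hm]) z₀
      have hlen' : b - m ≤ k * (1/(2*K)) := by
        push_cast at hlen
        simp only [hm]
        linarith
      obtain ⟨f₂, hf₂0, hf₂⟩ := ih m b hmI hb hmb hlen' (f₁ m)
      obtain ⟨f, hfa, hf⟩ := glue_sol ham hmb hf₁ hf₂ hf₂0.symm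
      exact ⟨f, by rw [hfa, hf₁0], hf⟩

/-- Global existence on `[0,1]` for a linear ODE with continuous coefficients. -/
theorem linODE_exists (hM : Continuous M) (z₀ : E) :
    ∃ f : ℝ → E, f 0 = z₀ ∧ ∀ t ∈ Icc (0:ℝ) 1, HasDerivWithinAt f (M t (f t)) (Icc 0 1) t := by
  obtain ⟨C, hC⟩ := isCompact_Icc.exists_bound_of_continuousOn (s := Icc (0:ℝ) 1) hM.continuousOn
  set K := max C 1 with hKdef
  have hK : (0:ℝ) < K := lt_of_lt_of_le one_pos (le_max_right _ _)
  have hbd : ∀ t ∈ Icc (0:ℝ) 1, ‖M t‖ ≤ K := fun t ht => (hC t ht).trans (le_max_left _ _)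
  have hk : (1:ℝ) - 0 ≤ (⌈2*K⌉₊ : ℝ) * (1/(2*K)) := by
    rw [mul_one_div, le_div_iff₀ (by positivity)]
    simpa using Nat.le_ceil (2*K)
  exact linODE_exists_aux hM hK hbd ⌈2*K⌉₊ 0 1 (by simp) (by simp) zero_le_one hk z₀

/-- Uniqueness on `[0,1]` for a linear ODE, from coincidence at any point of `[0,1]`. -/
theorem linODE_unique (hM : Continuous M) {f g : ℝ → E}
    (hf : ∀ t ∈ Icc (0:ℝ) 1, HasDerivWithinAt f (M t (f t)) (Icc 0 1) t)
    (hg : ∀ t ∈ Icc (0:ℝ) 1, HasDerivWithinAt g (M t (g t)) (Icc 0 1) t)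
    {t₀ : ℝ} (ht₀ : t₀ ∈ Icc (0:ℝ) 1) (h : f t₀ = g t₀) : EqOn f g (Icc 0 1) := by
  obtain ⟨C, hC⟩ := isCompact_Icc.exists_bound_of_continuousOn (s := Icc (0:ℝ) 1) hM.continuousOn
  set v : ℝ → E → E := fun t z => M (projIcc (0:ℝ) 1 zero_le_one t) z with hvdef
  have hv : ∀ t, LipschitzOnWith (max C 0).toNNReal (v t) univ := by
    intro t
    apply LipschitzWith.lipschitzOnWith
    apply (M _).lipschitz.weaken
    rw [← norm_toNNReal]
    exact Real.toNNReal_mono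
      ((hC _ (projIcc _ _ zero_le_one t).2).trans (le_max_left _ _))
  have hveq : ∀ t ∈ Icc (0:ℝ) 1, ∀ z : E, v t z = M t z := by
    intro t ht z
    simp only [hvdef, projIcc_of_mem zero_le_one ht]
  have hfc : ContinuousOn f (Icc (0:ℝ) 1) := fun t ht => (hf t ht).continuousWithinAt
  have hgc : ContinuousOn g (Icc (0:ℝ) 1) := fun t ht => (hg t ht).continuousWithinAt
  have left : EqOn f g (Icc 0 t₀) := by
    apply ODE_solution_unique_of_mem_Icc_left (fun t _ => hv t)
      (hfc.mono (Icc_subset_Icc le_rfl ht₀.2)) ?_ (fun _ _ => mem_univ _)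
      (hgc.mono (Icc_subset_Icc le_rfl ht₀.2)) ?_ (fun _ _ => mem_univ _) h
    · intro t ht
      have htI : t ∈ Icc (0:ℝ) 1 := ⟨ht.1.le, ht.2.trans ht₀.2⟩
      rw [hveq t htI]
      exact ((hf t htI).mono (Icc_subset_Icc le_rfl htI.2)).mono_of_mem_nhdsWithin
        (Icc_mem_nhdsLE_of_mem ⟨ht.1, le_rfl⟩)
    · intro t ht
      have htI : t ∈ Icc (0:ℝ) 1 := ⟨ht.1.le, ht.2.trans ht₀.2⟩
      rw [hveq t htI]
      exact ((hg t htI).mono (Icc_subset_Icc le_rfl htI.2)).mono_of_mem_nhdsWithin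
        (Icc_mem_nhdsLE_of_mem ⟨ht.1, le_rfl⟩)
  have right : EqOn f g (Icc t₀ 1) := by
    apply ODE_solution_unique_of_mem_Icc_right (fun t _ => hv t)
      (hfc.mono (Icc_subset_Icc ht₀.1 le_rfl)) ?_ (fun _ _ => mem_univ _)
      (hgc.mono (Icc_subset_Icc ht₀.1 le_rfl)) ?_ (fun _ _ => mem_univ _) h
    · intro t ht
      have htI : t ∈ Icc (0:ℝ) 1 := ⟨ht₀.1.trans ht.1, ht.2.le⟩
      rw [hveq t htI]
      exact ((hf t htI).mono (Icc_subset_Icc htI.1 le_rfl)).mono_of_mem_nhdsWithin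
        (Icc_mem_nhdsGE_of_mem ⟨le_rfl, ht.2⟩)
    · intro t ht
      have htI : t ∈ Icc (0:ℝ) 1 := ⟨ht₀.1.trans ht.1, ht.2.le⟩
      rw [hveq t htI]
      exact ((hg t htI).mono (Icc_subset_Icc htI.1 le_rfl)).mono_of_mem_nhdsWithin
        (Icc_mem_nhdsGE_of_mem ⟨le_rfl, ht.2⟩)
  intro t ht
  rcases le_total t t₀ with hle | hle
  · exact left ⟨ht.1, hle⟩
  · exact right ⟨hle, ht.2⟩

end ODE


section Jac

variable {n : ℕ}

/-- The Hamiltonian coefficient matrix as a linear map, from the matrix triple `(A, B, R)`. -/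
def jacLin0 (T : Matrix (Fin n) (Fin n) ℝ × Matrix (Fin n) (Fin n) ℝ × Matrix (Fin n) (Fin n) ℝ) :
    ((Fin n → ℝ) × (Fin n → ℝ)) →ₗ[ℝ] ((Fin n → ℝ) × (Fin n → ℝ)) where
  toFun z := ((-T.1ᵀ) *ᵥ z.1 + T.2.2 *ᵥ z.2, T.2.1 *ᵥ z.1 + T.1 *ᵥ z.2)
  map_add' z w := by
    simp only [Prod.fst_add, Prod.snd_add, Matrix.mulVec_add, Prod.mk_add_mk, Prod.mk.injEq]
    constructor <;> abel
  map_smul' c z := by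
    simp only [Prod.smul_fst, Prod.smul_snd, Matrix.mulVec_smul, RingHom.id_apply,
      Prod.smul_mk, smul_add]

/-- The assembly of the CLM from the matrix triple, as a linear map (hence continuous). -/
noncomputable def jacTheta :
    (Matrix (Fin n) (Fin n) ℝ × Matrix (Fin n) (Fin n) ℝ × Matrix (Fin n) (Fin n) ℝ) →ₗ[ℝ]
      (((Fin n → ℝ) × (Fin n → ℝ)) →L[ℝ] ((Fin n → ℝ) × (Fin n → ℝ))) where
  toFun T := LinearMap.toContinuousLinearMap (jacLin0 T)
  map_add' T T' := by
    apply ContinuousLinearMap.ext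
    intro z
    simp only [LinearMap.coe_toContinuousLinearMap', jacLin0, LinearMap.coe_mk, AddHom.coe_mk,
      ContinuousLinearMap.add_apply, Prod.fst_add, Prod.snd_add, Matrix.transpose_add,
      Matrix.add_mulVec, Prod.mk_add_mk, Prod.mk.injEq, neg_add]
    constructor <;> abel
  map_smul' c T := by
    apply ContinuousLinearMap.ext
    intro z
    simp only [LinearMap.coe_toContinuousLinearMap', jacLin0, LinearMap.coe_mk, AddHom.coe_mk,
      RingHom.id_apply, ContinuousLinearMap.coe_smul', Pi.smul_apply,
      Prod.smul_fst, Prod.smul_snd, Matrix.transpose_smul, Matrix.neg_mulVec,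
      Matrix.smul_mulVec, Prod.smul_mk, smul_neg, smul_add]

@[simp] lemma jacTheta_apply
    (T : Matrix (Fin n) (Fin n) ℝ × Matrix (Fin n) (Fin n) ℝ × Matrix (Fin n) (Fin n) ℝ)
    (z : (Fin n → ℝ) × (Fin n → ℝ)) :
    jacTheta T z = ((-T.1ᵀ) *ᵥ z.1 + T.2.2 *ᵥ z.2, T.2.1 *ᵥ z.1 + T.1 *ᵥ z.2) := rfl

lemma jacTheta_cont {A B R : ℝ → Matrix (Fin n) (Fin n) ℝ}
    (hA : Continuous A) (hB : Continuous B) (hR : Continuous R) :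
    Continuous (fun t => jacTheta (A t, B t, R t)) :=
  jacTheta.continuous_of_finiteDimensional.comp (hA.prodMk (hB.prodMk hR))

end Jac

section Dot

variable {n : ℕ}

lemma hasDerivWithinAt_dot {u v : ℝ → Fin n → ℝ} {u' v' : Fin n → ℝ} {s : Set ℝ} {t : ℝ}
    (hu : HasDerivWithinAt u u' s t) (hv : HasDerivWithinAt v v' s t) :
    HasDerivWithinAt (fun τ => u τ ⬝ᵥ v τ) (u' ⬝ᵥ v t + u t ⬝ᵥ v') s t := by
  have hcoord : ∀ (w : ℝ → Fin n → ℝ) (w' : Fin n → ℝ), HasDerivWithinAt w w' s t →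
      ∀ i : Fin n, HasDerivWithinAt (fun τ => w τ i) (w' i) s t := by
    intro w w' hw i
    exact (ContinuousLinearMap.proj (R := ℝ) (φ := fun _ : Fin n => ℝ)
      i).hasFDerivAt.comp_hasDerivWithinAt t hw
  have : HasDerivWithinAt (fun τ => ∑ i, u τ i * v τ i)
      (∑ i, (u' i * v t i + u t i * v' i)) s t := by
    apply HasDerivWithinAt.fun_sum
    intro i _
    exact (hcoord u u' hu i).mul (hcoord v v' hv i)
  simpa only [dotProduct, Finset.sum_add_distrib] using this

lemma dot_mulVec_transpose (M : Matrix (Fin n) (Fin n) ℝ) (u w : Fin n → ℝ) :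
    (Mᵀ *ᵥ u) ⬝ᵥ w = u ⬝ᵥ (M *ᵥ w) := by
  rw [dotProduct_comm, Matrix.dotProduct_mulVec, Matrix.vecMul_transpose,
    dotProduct_comm]

lemma symm_dot_shift {M : Matrix (Fin n) (Fin n) ℝ} (hM : M.IsSymm) (u w : Fin n → ℝ) :
    u ⬝ᵥ (M *ᵥ w) = w ⬝ᵥ (M *ᵥ u) := by
  conv_lhs => rw [dotProduct_comm, ← hM.eq, dot_mulVec_transpose]

end Dot

/-- Orthogonal decomposition `ℝⁿ = A₁ ⊕ B₁`, with `B₁` the Euclidean orthogonal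
complement of `A₁`. -/
theorem stmt_2 {n : ℕ} (A B R : ℝ → Matrix (Fin n) (Fin n) ℝ)
    (hA : Continuous A) (hB : Continuous B) (hR : Continuous R)
    (hBsymm : ∀ t, (B t).IsSymm) (hRsymm : ∀ t, (R t).IsSymm) :
    (∀ v : Fin n → ℝ, ∃ a ∈ Aone n A B R, ∃ b ∈ Bone n A B R, v = a + b) ∧
    Bone n A B R = {w | ∀ a ∈ Aone n A B R, w ⬝ᵥ a = 0} := by
  classical
  have mem0 : (0:ℝ) ∈ Icc (0:ℝ) 1 := ⟨le_rfl, zero_le_one⟩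
  have mem1 : (1:ℝ) ∈ Icc (0:ℝ) 1 := ⟨zero_le_one, le_rfl⟩
  set MT : ℝ → ((Fin n → ℝ) × (Fin n → ℝ)) →L[ℝ] ((Fin n → ℝ) × (Fin n → ℝ)) :=
    fun t => jacTheta (A t, B t, R t) with hMTdef
  have hMT : Continuous MT := jacTheta_cont hA hB hR
  have hex : ∀ p₀ : Fin n → ℝ, ∃ f : ℝ → (Fin n → ℝ) × (Fin n → ℝ), f 0 = (p₀, 0) ∧
      ∀ t ∈ Icc (0:ℝ) 1, HasDerivWithinAt f (MT t (f t)) (Icc 0 1) t :=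
    fun p₀ => linODE_exists hMT (p₀, 0)
  choose S hS0 hSd using hex
  have hSjac : ∀ p₀, IsJacobiSol n A B R (fun t => (S p₀ t).1) (fun t => (S p₀ t).2) := by
    intro p₀ t ht
    exact ⟨(ContinuousLinearMap.fst ℝ (Fin n → ℝ)
        (Fin n → ℝ)).hasFDerivAt.comp_hasDerivWithinAt t (hSd p₀ t ht),
      (ContinuousLinearMap.snd ℝ (Fin n → ℝ)
        (Fin n → ℝ)).hasFDerivAt.comp_hasDerivWithinAt t (hSd p₀ t ht)⟩
  have hpair : ∀ {p x : ℝ → Fin n → ℝ}, IsJacobiSol n A B R p x →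
      ∀ t ∈ Icc (0:ℝ) 1,
        HasDerivWithinAt (fun s => (p s, x s)) (MT t (p t, x t)) (Icc 0 1) t := by
    intro p x h t ht
    exact (h t ht).1.prodMk (h t ht).2
  have hadd : ∀ p q : Fin n → ℝ, S (p + q) 1 = S p 1 + S q 1 := by
    intro p q
    have hsol : ∀ t ∈ Icc (0:ℝ) 1,
        HasDerivWithinAt (fun τ => S p τ + S q τ) (MT t (S p t + S q t)) (Icc 0 1) t := by
      intro t ht
      have := (hSd p t ht).add (hSd q t ht)
      rwa [← map_add] at this
    have h0 : S (p + q) 0 = S p 0 + S q 0 := by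
      rw [hS0, hS0, hS0, Prod.mk_add_mk, add_zero]
    exact linODE_unique hMT (hSd (p + q)) hsol mem0 h0 mem1
  have hsmul : ∀ (c : ℝ) (p : Fin n → ℝ), S (c • p) 1 = c • S p 1 := by
    intro c p
    have hsol : ∀ t ∈ Icc (0:ℝ) 1,
        HasDerivWithinAt (fun τ => c • S p τ) (MT t (c • S p t)) (Icc 0 1) t := by
      intro t ht
      have := (hSd p t ht).const_smul c
      rwa [← _root_.map_smul] at this
    have h0 : S (c • p) 0 = c • S p 0 := by
      rw [hS0, hS0, Prod.smul_mk, smul_zero]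
    exact linODE_unique hMT (hSd (c • p)) hsol mem0 h0 mem1
  let Tlin : EuclideanSpace ℝ (Fin n) →ₗ[ℝ] ((Fin n → ℝ) × (Fin n → ℝ)) :=
    { toFun := fun p₀ => S p₀ 1
      map_add' := fun p q => hadd p q
      map_smul' := fun c p => by simpa using hsmul c p }
  let Φ : EuclideanSpace ℝ (Fin n) →ₗ[ℝ] EuclideanSpace ℝ (Fin n) := (WithLp.linearEquiv 2 ℝ (Fin n → ℝ)).symm.toLinearMap ∘ₗ (LinearMap.snd ℝ (Fin n → ℝ) (Fin n → ℝ)).comp Tlin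
  let Ψ : EuclideanSpace ℝ (Fin n) →ₗ[ℝ] EuclideanSpace ℝ (Fin n) := (WithLp.linearEquiv 2 ℝ (Fin n → ℝ)).symm.toLinearMap ∘ₗ (LinearMap.fst ℝ (Fin n → ℝ) (Fin n → ℝ)).comp Tlin
  have hΦ : ∀ p₀ : Fin n → ℝ, Φ (WithLp.toLp 2 p₀) = WithLp.toLp 2 (S p₀ 1).2 := fun _ => rfl
  have hΨ : ∀ p₀ : Fin n → ℝ, Ψ (WithLp.toLp 2 p₀) = WithLp.toLp 2 (S p₀ 1).1 := fun _ => rfl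
  have hAone : Aone n A B R = (WithLp.toLp 2) ⁻¹' (LinearMap.range Φ : Set (EuclideanSpace ℝ (Fin n))) := by
    apply Set.eq_of_subset_of_subset
    · rintro v ⟨p, x, hsol, hx0, hx1⟩
      refine ⟨WithLp.toLp 2 (p 0), ?_⟩
      have h0 : S (p 0) 0 = (fun s => (p s, x s)) 0 := by
        show S (p 0) 0 = (p 0, x 0)
        rw [hS0, hx0]
      have h1 := linODE_unique hMT (hSd (p 0)) (hpair hsol) mem0 h0 mem1
      rw [hΦ, h1]
      exact congrArg (WithLp.toLp 2) hx1
    · rintro v ⟨p₀, hp⟩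
      exact ⟨_, _, hSjac p₀.ofLp, by rw [hS0], congrArg WithLp.ofLp hp⟩
  have hBone : Bone n A B R = (WithLp.toLp 2) ⁻¹' ((LinearMap.ker Φ).map Ψ : Set (EuclideanSpace ℝ (Fin n))) := by
    apply Set.eq_of_subset_of_subset
    · rintro w ⟨p, x, hsol, hx0, hx1, hp1⟩
      have h0 : S (p 0) 0 = (fun s => (p s, x s)) 0 := by
        show S (p 0) 0 = (p 0, x 0)
        rw [hS0, hx0]
      have h1 := linODE_unique hMT (hSd (p 0)) (hpair hsol) mem0 h0 mem1
      refine ⟨WithLp.toLp 2 (p 0), ?_, ?_⟩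
      · show Φ (WithLp.toLp 2 (p 0)) = 0
        rw [hΦ, h1]
        exact congrArg (WithLp.toLp 2) hx1
      · rw [hΨ, h1]
        exact congrArg (WithLp.toLp 2) hp1
    · rintro w ⟨p₀, hker, hp⟩
      refine ⟨_, _, hSjac p₀.ofLp, by rw [hS0], ?_, congrArg WithLp.ofLp hp⟩
      show (S p₀.ofLp 1).2 = 0
      exact congrArg WithLp.ofLp (LinearMap.mem_ker.mp hker)
  have conserved : ∀ p₀ q₀ : Fin n → ℝ,
      (S q₀ 1).1 ⬝ᵥ (S p₀ 1).2 - (S p₀ 1).1 ⬝ᵥ (S q₀ 1).2 = 0 := by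
    intro p₀ q₀
    set f := S q₀ with hfdef
    set g := S p₀ with hgdef
    set φ : ℝ → ℝ := fun t => (f t).1 ⬝ᵥ (g t).2 - (g t).1 ⬝ᵥ (f t).2 with hφ
    have hder : ∀ t ∈ Icc (0:ℝ) 1, HasDerivWithinAt φ 0 (Icc 0 1) t := by
      intro t ht
      have hf := hSd q₀ t ht
      have hg := hSd p₀ t ht
      have hf1 : HasDerivWithinAt (fun τ => (f τ).1) ((MT t (f t)).1) (Icc 0 1) t :=
        (ContinuousLinearMap.fst ℝ (Fin n → ℝ)
          (Fin n → ℝ)).hasFDerivAt.comp_hasDerivWithinAt t hf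
      have hf2 : HasDerivWithinAt (fun τ => (f τ).2) ((MT t (f t)).2) (Icc 0 1) t :=
        (ContinuousLinearMap.snd ℝ (Fin n → ℝ)
          (Fin n → ℝ)).hasFDerivAt.comp_hasDerivWithinAt t hf
      have hg1 : HasDerivWithinAt (fun τ => (g τ).1) ((MT t (g t)).1) (Icc 0 1) t :=
        (ContinuousLinearMap.fst ℝ (Fin n → ℝ)
          (Fin n → ℝ)).hasFDerivAt.comp_hasDerivWithinAt t hg
      have hg2 : HasDerivWithinAt (fun τ => (g τ).2) ((MT t (g t)).2) (Icc 0 1) t :=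
        (ContinuousLinearMap.snd ℝ (Fin n → ℝ)
          (Fin n → ℝ)).hasFDerivAt.comp_hasDerivWithinAt t hg
      have hd := (hasDerivWithinAt_dot hf1 hg2).fun_sub (hasDerivWithinAt_dot hg1 hf2)
      refine hd.congr_deriv ?_
      have e1 : ((A t)ᵀ *ᵥ (f t).1) ⬝ᵥ (g t).2 = (f t).1 ⬝ᵥ (A t *ᵥ (g t).2) :=
        dot_mulVec_transpose (A t) _ _
      have e2 : ((A t)ᵀ *ᵥ (g t).1) ⬝ᵥ (f t).2 = (g t).1 ⬝ᵥ (A t *ᵥ (f t).2) :=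
        dot_mulVec_transpose (A t) _ _
      have e3 : (R t *ᵥ (g t).2) ⬝ᵥ (f t).2 = (R t *ᵥ (f t).2) ⬝ᵥ (g t).2 := by
        rw [dotProduct_comm, symm_dot_shift (hRsymm t), dotProduct_comm]
      have e4 : (f t).1 ⬝ᵥ (B t *ᵥ (g t).1) = (g t).1 ⬝ᵥ (B t *ᵥ (f t).1) :=
        symm_dot_shift (hBsymm t) _ _
      simp only [hMTdef, jacTheta_apply, Matrix.neg_mulVec, add_dotProduct,
        dotProduct_add, neg_dotProduct]
      rw [e1, e2, e3, e4]
      ring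
    have hcont : ContinuousOn φ (Icc (0:ℝ) 1) := fun t ht => (hder t ht).continuousWithinAt
    have hconst := constant_of_has_deriv_right_zero hcont (fun t ht =>
      ((hder t ⟨ht.1, ht.2.le⟩).mono (Icc_subset_Icc ht.1 le_rfl)).mono_of_mem_nhdsWithin
        (Icc_mem_nhdsGE_of_mem ⟨le_rfl, ht.2⟩)) 1 mem1
    have h0 : φ 0 = 0 := by
      simp only [hφ, hfdef, hgdef, hS0]
      simp
    simpa using hconst.trans h0
  have hzerosol : ∀ t ∈ Icc (0:ℝ) 1,
      HasDerivWithinAt (fun _ : ℝ => (0 : (Fin n → ℝ) × (Fin n → ℝ)))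
        (MT t 0) (Icc 0 1) t := by
    intro t ht
    rw [show MT t (0 : (Fin n → ℝ) × (Fin n → ℝ)) = 0 from map_zero _]
    exact hasDerivWithinAt_const t _ _
  have hinj : ∀ q₀ : EuclideanSpace ℝ (Fin n), Φ q₀ = 0 → Ψ q₀ = 0 → q₀ = 0 := by
    intro q₀ h1 h2
    have hS1 : S q₀.ofLp 1 = 0 := Prod.ext_iff.mpr ⟨congrArg WithLp.ofLp h2, congrArg WithLp.ofLp h1⟩
    have heqon := linODE_unique hMT (hSd q₀.ofLp) hzerosol mem1 hS1 mem0
    have h3 : ((q₀.ofLp, 0) : (Fin n → ℝ) × (Fin n → ℝ)) = 0 := by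
      rw [← hS0 q₀.ofLp]
      exact heqon
    exact WithLp.ofLp_injective 2 (congrArg Prod.fst h3)
  have hdotinner : ∀ x y : EuclideanSpace ℝ (Fin n), inner ℝ x y = x.ofLp ⬝ᵥ y.ofLp := by
    intro x y
    simp [PiLp.inner_apply, RCLike.inner_apply, dotProduct, conj_trivial, mul_comm]
  have horth : ∀ q₀ p₀ : EuclideanSpace ℝ (Fin n), Φ q₀ = 0 →
      ((S q₀.ofLp 1).1) ⬝ᵥ ((S p₀.ofLp 1).2) = 0 := by
    intro q₀ p₀ h
    have hc := conserved p₀.ofLp q₀.ofLp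
    rw [show (S q₀.ofLp 1).2 = 0 from congrArg WithLp.ofLp h] at hc
    simpa using hc
  have hrank := Φ.finrank_range_add_finrank_ker
  rw [finrank_euclideanSpace_fin] at hrank
  have horthrank := (LinearMap.range Φ).finrank_add_finrank_orthogonal
  rw [finrank_euclideanSpace_fin] at horthrank
  have hresinj : Function.Injective (Ψ.domRestrict (LinearMap.ker Φ)) := by
    intro a b hab
    have ha' : Φ a.1 = 0 := a.2
    have hb' : Φ b.1 = 0 := b.2
    have hΦab : Φ (a.1 - b.1) = 0 := by rw [map_sub, ha', hb', sub_zero]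
    have hΨab : Ψ (a.1 - b.1) = 0 := by
      rw [map_sub, sub_eq_zero]
      exact hab
    exact Subtype.ext (sub_eq_zero.mp (hinj _ hΦab hΨab))
  have hBrank : Module.finrank ℝ ((LinearMap.ker Φ).map Ψ) =
      Module.finrank ℝ (LinearMap.ker Φ) := by
    rw [← LinearMap.range_domRestrict]
    exact LinearMap.finrank_range_of_inj hresinj
  have hle : (LinearMap.ker Φ).map Ψ ≤ (LinearMap.range Φ)ᗮ := by
    rintro w ⟨q₀, hq₀, rfl⟩
    rw [Submodule.mem_orthogonal]
    rintro u ⟨p₀, rfl⟩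
    rw [hdotinner, dotProduct_comm]
    exact horth q₀ p₀ hq₀
  have heqsub : (LinearMap.ker Φ).map Ψ = (LinearMap.range Φ)ᗮ :=
    Submodule.eq_of_le_of_finrank_eq hle (by omega)
  constructor
  · intro v
    obtain ⟨a, ha, b, hb, hv⟩ :=
      Submodule.exists_add_mem_mem_orthogonal (K := LinearMap.range Φ) (WithLp.toLp 2 v)
    refine ⟨a.ofLp, ?_, b.ofLp, ?_, congrArg WithLp.ofLp hv⟩
    · rw [hAone]
      exact ha
    · rw [hBone]
      rw [heqsub]
      exact hb
  · rw [hBone, hAone]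
    ext w
    simp only [SetLike.mem_coe, mem_setOf_eq, mem_preimage]
    constructor
    · intro hw a ha
      have hw' : WithLp.toLp 2 w ∈ (LinearMap.range Φ)ᗮ := heqsub ▸ hw
      have h5 := (Submodule.mem_orthogonal _ _).mp hw' _ ha
      rw [hdotinner] at h5
      rw [dotProduct_comm]
      exact h5
    · intro hw
      rw [heqsub]
      rw [Submodule.mem_orthogonal]
      intro u hu
      rw [hdotinner, dotProduct_comm]
      exact hw u.ofLp hu
end

section
/- With notation as in the orthogonal decomposition above, the linear map W → ℝⁿ/A₁ sending a solution (p,x) ∈ W (i.e. with x(0) = x(1) = 0) to the class of p(1) modulo A₁ is injective, and its image is all of ℝⁿ/A₁; hence it induces a linear isomorphism W ≅ ℝⁿ/A₁. -/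
open Matrix Set

open Filter
open scoped NNReal

noncomputable section
namespace JacobiAux

variable {E : Type*} [NormedAddCommGroup E] [NormedSpace ℝ E] [CompleteSpace E]


variable {E : Type*} [NormedAddCommGroup E] [NormedSpace ℝ E] [CompleteSpace E]

lemma Icc_mem_nhdsWithin_Ici {t : ℝ} (ht : t ∈ Ico (0:ℝ) 1) :
    Icc (0:ℝ) 1 ∈ nhdsWithin t (Ici t) := by
  rw [mem_nhdsWithin]
  exact ⟨Iio 1, isOpen_Iio, ht.2, fun y hy => ⟨le_trans ht.1 hy.2, le_of_lt hy.1⟩⟩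

lemma Icc_mem_nhdsWithin_Iic {t : ℝ} (ht : t ∈ Ioc (0:ℝ) 1) :
    Icc (0:ℝ) 1 ∈ nhdsWithin t (Iic t) := by
  rw [mem_nhdsWithin]
  exact ⟨Ioi 0, isOpen_Ioi, ht.1, fun y hy => ⟨le_of_lt hy.1, le_trans hy.2 ht.2⟩⟩

/-- One Picard–Lindelöf step for a linear ODE. -/
lemma exists_step (G : ℝ → E →L[ℝ] E) (hG : Continuous G) (K : ℝ≥0)
    (hK : ∀ t, ‖G t‖ ≤ (K:ℝ)) {a b : ℝ} (hab : a ≤ b) (hsmall : (b - a) * (2*(K:ℝ)) ≤ 1)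
    (v₀ : E) :
    ∃ f : ℝ → E, f a = v₀ ∧ ∀ t ∈ Icc a b, HasDerivWithinAt f (G t (f t)) (Icc a b) t := by
  have hK0 : (0:ℝ) ≤ K := K.2
  have hv0 : (0:ℝ) ≤ ‖v₀‖ := norm_nonneg _
  apply IsPicardLindelof.exists_eq_forall_mem_Icc_hasDerivWithinAt₀
    (f := fun t x => G t x) (t₀ := ⟨a, le_refl a, hab⟩) (x₀ := v₀) (a := ‖v₀‖₊ + 1)
    (L := K * (2*‖v₀‖₊+1)) (K := K)
  constructor
  · intro t _
    exact ((G t).lipschitz.weaken (by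
      rw [← NNReal.coe_le_coe]
      exact le_trans (by exact_mod_cast le_refl ‖G t‖₊) (by simpa using hK t))).lipschitzOnWith
  · intro x _
    exact (((ContinuousLinearMap.apply ℝ E x).continuous).comp hG).continuousOn
  · intro t _ x hx
    have h1 := mem_closedBall_iff_norm.mp hx
    push_cast at h1 ⊢
    calc ‖G t x‖ ≤ ‖G t‖ * ‖x‖ := (G t).le_opNorm x
    _ ≤ (K:ℝ) * (2*‖v₀‖+1) := by
        apply mul_le_mul (hK t) ?_ (norm_nonneg x) hK0
        have h2 : ‖x‖ ≤ ‖x - v₀‖ + ‖v₀‖ := by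
          calc ‖x‖ = ‖x - v₀ + v₀‖ := by rw [sub_add_cancel]
          _ ≤ ‖x - v₀‖ + ‖v₀‖ := norm_add_le _ _
        linarith
  · have hm : max (b - a) (a - a) = b - a := by rw [sub_self]; exact max_eq_left (by linarith)
    simp only [hm, NNReal.coe_mul, NNReal.coe_add, NNReal.coe_ofNat, NNReal.coe_one, coe_nnnorm,
      NNReal.coe_zero, sub_zero]
    nlinarith



variable {E : Type*} [NormedAddCommGroup E] [NormedSpace ℝ E] [CompleteSpace E]

/-- Glue two solutions at a junction point. -/
lemma glue (G : ℝ → E → E) {a m b : ℝ} (ham : a ≤ m) (hmb : m ≤ b)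
    {f g : ℝ → E} (hf : ∀ t ∈ Icc a m, HasDerivWithinAt f (G t (f t)) (Icc a m) t)
    (hg : ∀ t ∈ Icc m b, HasDerivWithinAt g (G t (g t)) (Icc m b) t)
    (hfg : f m = g m) :
    ∃ h : ℝ → E, h a = f a ∧ ∀ t ∈ Icc a b, HasDerivWithinAt h (G t (h t)) (Icc a b) t := by
  set h : ℝ → E := fun t => if t ≤ m then f t else g t with hh
  have hEqf : EqOn h f (Iic m) := fun t ht => if_pos (mem_Iic.mp ht)
  have hEqg : EqOn h g (Icc m b) := fun t ht => by
    by_cases h' : t ≤ m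
    · have : t = m := le_antisymm h' ht.1
      simp [hh, this, hfg]
    · simp [hh, h']
  refine ⟨h, hEqf (by simpa using ham), ?_⟩
  intro t ht
  rcases lt_trichotomy t m with hc | hc | hc
  · -- t < m : locally h = f
    have hmem : Icc a m ∈ nhdsWithin t (Icc a b) := by
      rw [mem_nhdsWithin]
      exact ⟨Iio m, isOpen_Iio, hc, fun y hy => ⟨hy.2.1, le_of_lt hy.1⟩⟩
    have hd : HasDerivWithinAt f (G t (f t)) (Icc a b) t :=
      (hf t ⟨ht.1, le_of_lt hc⟩).mono_of_mem_nhdsWithin hmem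
    have heq : h =ᶠ[nhdsWithin t (Icc a b)] f := by
      filter_upwards [hmem] with y hy using hEqf hy.2
    have := hd.congr_of_eventuallyEq heq (hEqf (le_of_lt hc))
    rwa [hEqf (le_of_lt hc)]
  · -- t = m : union of the two one-sided derivatives
    subst hc
    have e1 : h t = f t := hEqf (mem_Iic.mpr le_rfl)
    have e2 : h t = g t := hEqg ⟨le_rfl, hmb⟩
    have h1 : HasDerivWithinAt h (G t (h t)) (Icc a t) t := by
      rw [e1]
      exact (hf t ⟨ht.1, le_refl t⟩).congr_of_eventuallyEq
        (eventually_of_mem self_mem_nhdsWithin (fun y hy => hEqf (mem_Iic.mpr hy.2))) e1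
    have h2 : HasDerivWithinAt h (G t (h t)) (Icc t b) t := by
      rw [e2]
      exact (hg t ⟨le_rfl, hmb⟩).congr_of_eventuallyEq
        (eventually_of_mem self_mem_nhdsWithin (fun y hy => hEqg hy)) e2
    have := h1.union h2
    rwa [Icc_union_Icc_eq_Icc ht.1 hmb] at this
  · -- t > m : locally h = g
    have hmem : Icc m b ∈ nhdsWithin t (Icc a b) := by
      rw [mem_nhdsWithin]
      exact ⟨Ioi m, isOpen_Ioi, hc, fun y hy => ⟨le_of_lt hy.1, hy.2.2⟩⟩
    have hd : HasDerivWithinAt g (G t (g t)) (Icc a b) t :=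
      (hg t ⟨le_of_lt hc, ht.2⟩).mono_of_mem_nhdsWithin hmem
    have heq : h =ᶠ[nhdsWithin t (Icc a b)] g := by
      filter_upwards [hmem] with y hy using hEqg hy
    have e : h t = g t := hEqg ⟨le_of_lt hc, ht.2⟩
    have := hd.congr_of_eventuallyEq heq e
    rwa [e]



variable {E : Type*} [NormedAddCommGroup E] [NormedSpace ℝ E] [CompleteSpace E]


lemma exists_iter (G : ℝ → E →L[ℝ] E) (hG : Continuous G) (K : ℝ≥0)
    (hK : ∀ t, ‖G t‖ ≤ (K:ℝ)) {δ : ℝ} (hδ0 : 0 ≤ δ) (hδ : δ * (2*(K:ℝ)) ≤ 1) :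
    ∀ (k : ℕ) (a : ℝ) (v₀ : E), ∃ f : ℝ → E, f a = v₀ ∧
      ∀ t ∈ Icc a (a + (k+1)*δ), HasDerivWithinAt f (G t (f t)) (Icc a (a + (k+1)*δ)) t := by
  intro k
  induction k with
  | zero =>
    intro a v₀
    simpa using exists_step G hG K hK (by linarith : a ≤ a + δ)
      (by rw [add_sub_cancel_left]; exact hδ) v₀
  | succ k ih =>
    intro a v₀
    obtain ⟨f, hf0, hf⟩ := exists_step G hG K hK (by linarith : a ≤ a + δ)
      (by rw [add_sub_cancel_left]; exact hδ) v₀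
    obtain ⟨g, hg0, hg⟩ := ih (a + δ) (f (a + δ))
    have hend : a + ((k+1:ℕ)+1)*δ = (a + δ) + ((k:ℕ)+1)*δ := by push_cast; ring
    obtain ⟨h, hh0, hh⟩ := glue (fun t x => G t x)
      (by linarith : a ≤ a + δ)
      (by have : (0:ℝ) ≤ ((k:ℕ)+1)*δ := by positivity
          linarith : a + δ ≤ (a+δ) + ((k:ℕ)+1)*δ) hf hg hg0.symm
    rw [hend]
    exact ⟨h, by rw [hh0, hf0], hh⟩

/-- Global existence for a linear ODE on `[0,1]`. -/
lemma exists_sol (G : ℝ → E →L[ℝ] E) (hG : Continuous G) (v₀ : E) :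
    ∃ f : ℝ → E, f 0 = v₀ ∧ ∀ t ∈ Icc (0:ℝ) 1, HasDerivWithinAt f (G t (f t)) (Icc 0 1) t := by
  -- clamp G to [0,1]
  set c : ℝ → ℝ := fun t => min (max t 0) 1 with hc
  have hccont : Continuous c := (continuous_id.max continuous_const).min continuous_const
  have hcmem : ∀ t, c t ∈ Icc (0:ℝ) 1 :=
    fun t => ⟨le_min (le_max_right _ _) zero_le_one, min_le_right _ _⟩
  have hceq : ∀ t ∈ Icc (0:ℝ) 1, c t = t := fun t ht => by
    simp [hc, max_eq_left ht.1, min_eq_left ht.2]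
  set Gc : ℝ → E →L[ℝ] E := fun t => G (c t) with hGc
  have hGccont : Continuous Gc := hG.comp hccont
  -- uniform bound
  obtain ⟨C, hC⟩ := (isCompact_Icc (a := (0:ℝ)) (b := 1)).exists_bound_of_continuousOn
    (hG.norm.continuousOn)
  set K : ℝ≥0 := ⟨max C 0, le_max_right _ _⟩ with hKdef
  have hK : ∀ t, ‖Gc t‖ ≤ (K:ℝ) := fun t => by
    have h1 : ‖G (c t)‖ ≤ C := by simpa using hC _ (hcmem t)
    simp only [hGc, hKdef, NNReal.coe_mk]
    exact le_trans h1 (le_max_left _ _)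
  -- step size
  set δ : ℝ := 1 / (2*(K:ℝ)+1) with hδdef
  have hKpos : (0:ℝ) ≤ K := K.2
  have hδ0 : 0 < δ := by positivity
  have hδsmall : δ * (2*(K:ℝ)) ≤ 1 := by
    rw [hδdef, div_mul_eq_mul_div, one_mul, div_le_one (by positivity)]
    linarith
  obtain ⟨k, hk⟩ := exists_nat_gt (1/δ)
  have hk1 : 1 ≤ ((k:ℝ)+1)*δ := by
    rw [div_lt_iff₀ hδ0] at hk
    nlinarith
  obtain ⟨f, hf0, hf⟩ := exists_iter Gc hGccont K hK (le_of_lt hδ0) hδsmall k 0 v₀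
  rw [zero_add] at hf
  refine ⟨f, hf0, fun t ht => ?_⟩
  have hsub : Icc (0:ℝ) 1 ⊆ Icc 0 (((k:ℝ)+1)*δ) := Icc_subset_Icc_right hk1
  have := (hf t (hsub ht)).mono hsub
  rwa [show Gc t = G t by simp only [hGc]; rw [hceq t ht]] at this

/-- Uniqueness (forward from `0`) for a linear ODE on `[0,1]`. -/
lemma unique_zero (G : ℝ → E →L[ℝ] E) (hG : Continuous G) {f g : ℝ → E}
    (hf : ∀ t ∈ Icc (0:ℝ) 1, HasDerivWithinAt f (G t (f t)) (Icc 0 1) t)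
    (hg : ∀ t ∈ Icc (0:ℝ) 1, HasDerivWithinAt g (G t (g t)) (Icc 0 1) t)
    (h0 : f 0 = g 0) : EqOn f g (Icc (0:ℝ) 1) := by
  set c : ℝ → ℝ := fun t => min (max t 0) 1 with hc
  have hccont : Continuous c := (continuous_id.max continuous_const).min continuous_const
  have hcmem : ∀ t, c t ∈ Icc (0:ℝ) 1 :=
    fun t => ⟨le_min (le_max_right _ _) zero_le_one, min_le_right _ _⟩
  have hceq : ∀ t ∈ Icc (0:ℝ) 1, c t = t := fun t ht => by
    simp [hc, max_eq_left ht.1, min_eq_left ht.2]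
  obtain ⟨C, hC⟩ := (isCompact_Icc (a := (0:ℝ)) (b := 1)).exists_bound_of_continuousOn
    (hG.norm.continuousOn)
  set K : ℝ≥0 := ⟨max C 0, le_max_right _ _⟩ with hKdef
  have hK : ∀ t, ‖G (c t)‖₊ ≤ K := by
    intro t
    have h1 : ‖G (c t)‖ ≤ C := by simpa using hC _ (hcmem t)
    rw [← NNReal.coe_le_coe]
    simp only [coe_nnnorm, hKdef, NNReal.coe_mk]
    exact le_trans h1 (le_max_left _ _)
  apply ODE_solution_unique_of_mem_Icc_right (v := fun t x => G (c t) x)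
    (s := fun _ => univ) (K := K)
    (fun t _ => ((G (c t)).lipschitz.weaken (hK t)).lipschitzOnWith)
    (fun t ht => (hf t ht).continuousWithinAt) ?_ (fun _ _ => mem_univ _)
    (fun t ht => (hg t ht).continuousWithinAt) ?_ (fun _ _ => mem_univ _) h0
  · intro t ht
    have hmem : Icc (0:ℝ) 1 ∈ nhdsWithin t (Ici t) := by
      rw [mem_nhdsWithin]
      exact ⟨Iio 1, isOpen_Iio, ht.2, fun y hy => ⟨le_trans ht.1 hy.2, le_of_lt hy.1⟩⟩
    have h2 := (hf t ⟨ht.1, le_of_lt ht.2⟩).mono_of_mem_nhdsWithin hmem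
    simpa [hceq t ⟨ht.1, le_of_lt ht.2⟩] using h2
  · intro t ht
    have hmem : Icc (0:ℝ) 1 ∈ nhdsWithin t (Ici t) := by
      rw [mem_nhdsWithin]
      exact ⟨Iio 1, isOpen_Iio, ht.2, fun y hy => ⟨le_trans ht.1 hy.2, le_of_lt hy.1⟩⟩
    have h2 := (hg t ⟨ht.1, le_of_lt ht.2⟩).mono_of_mem_nhdsWithin hmem
    simpa [hceq t ⟨ht.1, le_of_lt ht.2⟩] using h2

/-- Uniqueness (backward from `1`). -/
lemma unique_one (G : ℝ → E →L[ℝ] E) (hG : Continuous G) {f g : ℝ → E}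
    (hf : ∀ t ∈ Icc (0:ℝ) 1, HasDerivWithinAt f (G t (f t)) (Icc 0 1) t)
    (hg : ∀ t ∈ Icc (0:ℝ) 1, HasDerivWithinAt g (G t (g t)) (Icc 0 1) t)
    (h1 : f 1 = g 1) : EqOn f g (Icc (0:ℝ) 1) := by
  set c : ℝ → ℝ := fun t => min (max t 0) 1 with hc
  have hccont : Continuous c := (continuous_id.max continuous_const).min continuous_const
  have hcmem : ∀ t, c t ∈ Icc (0:ℝ) 1 :=
    fun t => ⟨le_min (le_max_right _ _) zero_le_one, min_le_right _ _⟩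
  have hceq : ∀ t ∈ Icc (0:ℝ) 1, c t = t := fun t ht => by
    simp [hc, max_eq_left ht.1, min_eq_left ht.2]
  obtain ⟨C, hC⟩ := (isCompact_Icc (a := (0:ℝ)) (b := 1)).exists_bound_of_continuousOn
    (hG.norm.continuousOn)
  set K : ℝ≥0 := ⟨max C 0, le_max_right _ _⟩ with hKdef
  have hK : ∀ t, ‖G (c t)‖₊ ≤ K := by
    intro t
    have h1 : ‖G (c t)‖ ≤ C := by simpa using hC _ (hcmem t)
    rw [← NNReal.coe_le_coe]
    simp only [coe_nnnorm, hKdef, NNReal.coe_mk]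
    exact le_trans h1 (le_max_left _ _)
  apply ODE_solution_unique_of_mem_Icc_left (v := fun t x => G (c t) x)
    (s := fun _ => univ) (K := K)
    (fun t _ => ((G (c t)).lipschitz.weaken (hK t)).lipschitzOnWith)
    (fun t ht => (hf t ht).continuousWithinAt) ?_ (fun _ _ => mem_univ _)
    (fun t ht => (hg t ht).continuousWithinAt) ?_ (fun _ _ => mem_univ _) h1
  · intro t ht
    have hmem : Icc (0:ℝ) 1 ∈ nhdsWithin t (Iic t) := by
      rw [mem_nhdsWithin]
      exact ⟨Ioi 0, isOpen_Ioi, ht.1, fun y hy => ⟨le_of_lt hy.1, le_trans hy.2 ht.2⟩⟩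
    have h2 := (hf t ⟨le_of_lt ht.1, ht.2⟩).mono_of_mem_nhdsWithin hmem
    simpa [hceq t ⟨le_of_lt ht.1, ht.2⟩] using h2
  · intro t ht
    have hmem : Icc (0:ℝ) 1 ∈ nhdsWithin t (Iic t) := by
      rw [mem_nhdsWithin]
      exact ⟨Ioi 0, isOpen_Ioi, ht.1, fun y hy => ⟨le_of_lt hy.1, le_trans hy.2 ht.2⟩⟩
    have h2 := (hg t ⟨le_of_lt ht.1, ht.2⟩).mono_of_mem_nhdsWithin hmem
    simpa [hceq t ⟨le_of_lt ht.1, ht.2⟩] using h2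


section Sys


variable {n : ℕ}

abbrev EE (n : ℕ) := (Fin n → ℝ) × (Fin n → ℝ)

variable (A B R : ℝ → Matrix (Fin n) (Fin n) ℝ)

/-- The linear vector field of the Jacobi system. -/
def sysL (t : ℝ) : EE n →ₗ[ℝ] EE n where
  toFun v := ((-(A t)ᵀ) *ᵥ v.1 + (R t) *ᵥ v.2, (B t) *ᵥ v.1 + (A t) *ᵥ v.2)
  map_add' u v := by
    simp only [Prod.fst_add, Prod.snd_add, mulVec_add, Prod.mk_add_mk, Prod.mk.injEq]
    constructor <;> abel
  map_smul' c v := by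
    simp only [Prod.smul_fst, Prod.smul_snd, mulVec_smul, RingHom.id_apply, Prod.smul_mk,
      smul_add]

def sysF (t : ℝ) : EE n →L[ℝ] EE n := LinearMap.toContinuousLinearMap (sysL A B R t)

lemma sysF_apply (t : ℝ) (v : EE n) :
    sysF A B R t v = ((-(A t)ᵀ) *ᵥ v.1 + (R t) *ᵥ v.2, (B t) *ᵥ v.1 + (A t) *ᵥ v.2) := rfl

lemma sysF_cont (hA : Continuous A) (hB : Continuous B) (hR : Continuous R) :
    Continuous (sysF A B R) := by
  rw [continuous_clm_apply]
  intro v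
  simp only [sysF_apply]
  exact ((hA.matrix_transpose.neg.matrix_mulVec continuous_const).add
    (hR.matrix_mulVec continuous_const)).prodMk
    ((hB.matrix_mulVec continuous_const).add (hA.matrix_mulVec continuous_const))

/-- Paired formulation of solutions. -/
def PairSol (u : ℝ → EE n) : Prop :=
  ∀ t ∈ Icc (0:ℝ) 1, HasDerivWithinAt u (sysF A B R t (u t)) (Icc 0 1) t

lemma pairSol_iff (p x : ℝ → Fin n → ℝ) :
    IsJacobiSol n A B R p x ↔ PairSol A B R (fun t => (p t, x t)) := by
  constructor
  · intro h t ht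
    exact ((h t ht).1.prodMk (h t ht).2)
  · intro h t ht
    exact ⟨(h t ht).fst, (h t ht).snd⟩

lemma pairSol_fst_snd {u : ℝ → EE n} (hu : PairSol A B R u) :
    IsJacobiSol n A B R (fun t => (u t).1) (fun t => (u t).2) := by
  intro t ht
  exact ⟨(hu t ht).fst, (hu t ht).snd⟩

lemma PairSol.sub {u v : ℝ → EE n} (hu : PairSol A B R u) (hv : PairSol A B R v) :
    PairSol A B R (fun t => u t - v t) := by
  intro t ht
  have := (hu t ht).sub (hv t ht)
  rwa [← map_sub] at this

lemma PairSol.zero : PairSol A B R (fun _ => 0) := by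
  intro t ht
  simpa using (hasDerivWithinAt_const t (Icc (0:ℝ) 1) (0 : EE n))

lemma PairSol.add {u v : ℝ → EE n} (hu : PairSol A B R u) (hv : PairSol A B R v) :
    PairSol A B R (fun t => u t + v t) := by
  intro t ht
  have := (hu t ht).add (hv t ht)
  rwa [← map_add] at this

lemma PairSol.smul (c : ℝ) {u : ℝ → EE n} (hu : PairSol A B R u) :
    PairSol A B R (fun t => c • u t) := by
  intro t ht
  have := (hu t ht).const_smul c
  rwa [← _root_.map_smul] at this

/-- derivative of a dot product of two curves. -/
lemma hasDerivWithinAt_dot {p y : ℝ → Fin n → ℝ} {p' y' : Fin n → ℝ} {s : Set ℝ} {t : ℝ}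
    (hp : HasDerivWithinAt p p' s t) (hy : HasDerivWithinAt y y' s t) :
    HasDerivWithinAt (fun τ => p τ ⬝ᵥ y τ) (p' ⬝ᵥ y t + p t ⬝ᵥ y') s t := by
  have h : ∀ i : Fin n, HasDerivWithinAt (fun τ => p τ i * y τ i)
      (p' i * y t i + p t i * y' i) s t := by
    intro i
    exact (hasDerivWithinAt_pi.mp hp i).mul (hasDerivWithinAt_pi.mp hy i)
  have := HasDerivWithinAt.fun_sum (u := Finset.univ) (fun i _ => h i)
  simpa [dotProduct, Finset.sum_add_distrib] using this



variable (A B R : ℝ → Matrix (Fin n) (Fin n) ℝ)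


lemma dot_mulVec_symm (M : Matrix (Fin n) (Fin n) ℝ) (a d : Fin n → ℝ) :
    (Mᵀ *ᵥ a) ⬝ᵥ d = a ⬝ᵥ (M *ᵥ d) := by
  rw [mulVec_transpose, ← dotProduct_mulVec]

/-- Conservation of the symplectic pairing along two solutions. -/
lemma conservation (hBsymm : ∀ t, (B t).IsSymm) (hRsymm : ∀ t, (R t).IsSymm)
    {u v : ℝ → EE n} (hu : PairSol A B R u) (hv : PairSol A B R v) :
    (u 1).1 ⬝ᵥ (v 1).2 - (u 1).2 ⬝ᵥ (v 1).1 = (u 0).1 ⬝ᵥ (v 0).2 - (u 0).2 ⬝ᵥ (v 0).1 := by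
  set g : ℝ → ℝ := fun t => (u t).1 ⬝ᵥ (v t).2 - (u t).2 ⬝ᵥ (v t).1 with hgdef
  have hg : ∀ t ∈ Icc (0:ℝ) 1, HasDerivWithinAt g 0 (Icc 0 1) t := by
    intro t ht
    set a := (u t).1; set b := (u t).2; set c := (v t).1; set d := (v t).2
    have h1 := hasDerivWithinAt_dot (hu t ht).fst (hv t ht).snd
    have h2 := hasDerivWithinAt_dot (hu t ht).snd (hv t ht).fst
    have hD := h1.sub h2
    have hzero :
        ((sysF A B R t (u t)).1 ⬝ᵥ d + a ⬝ᵥ (sysF A B R t (v t)).2) -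
        ((sysF A B R t (u t)).2 ⬝ᵥ c + b ⬝ᵥ (sysF A B R t (v t)).1) = 0 := by
      rw [sysF_apply, sysF_apply]
      simp only
      have e1 : ((-(A t)ᵀ) *ᵥ a) ⬝ᵥ d = -(a ⬝ᵥ (A t *ᵥ d)) := by
        rw [neg_mulVec, neg_dotProduct, dot_mulVec_symm]
      have e2 : ((R t) *ᵥ b) ⬝ᵥ d = b ⬝ᵥ (R t *ᵥ d) := by
        rw [← (hRsymm t).eq, dot_mulVec_symm, (hRsymm t).eq]
      have e3 : ((B t) *ᵥ a) ⬝ᵥ c = a ⬝ᵥ (B t *ᵥ c) := by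
        rw [← (hBsymm t).eq, dot_mulVec_symm, (hBsymm t).eq]
      have e4 : b ⬝ᵥ ((-(A t)ᵀ) *ᵥ c) = -(((A t) *ᵥ b) ⬝ᵥ c) := by
        rw [neg_mulVec, dotProduct_neg, dotProduct_comm, dot_mulVec_symm, dotProduct_comm]
      rw [add_dotProduct, add_dotProduct, dotProduct_add, dotProduct_add,
        e1, e2, e3, e4]
      ring
    rw [hzero] at hD
    exact hD
  have hconst := constant_of_has_deriv_right_zero
    (f := g) (a := 0) (b := 1)
    (fun t ht => (hg t ht).continuousWithinAt)
    (fun t ht => (hg t ⟨ht.1, le_of_lt ht.2⟩).mono_of_mem_nhdsWithin (Icc_mem_nhdsWithin_Ici ht))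
  exact hconst 1 ⟨zero_le_one, le_rfl⟩


/-- A solution in `W` (i.e. `x(0)=x(1)=0`) whose `p(1)` lies in `A₁` vanishes identically. -/
lemma vanish (hA : Continuous A) (hB : Continuous B) (hR : Continuous R)
    (hBsymm : ∀ t, (B t).IsSymm) (hRsymm : ∀ t, (R t).IsSymm)
    {u : ℝ → EE n} (hu : PairSol A B R u) (h02 : (u 0).2 = 0) (h12 : (u 1).2 = 0)
    (h11 : (u 1).1 ∈ Aone n A B R) : ∀ t ∈ Icc (0:ℝ) 1, u t = 0 := by
  obtain ⟨r, z, hrz, hz0, hz1⟩ := h11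
  have hv : PairSol A B R (fun t => (r t, z t)) := (pairSol_iff A B R r z).mp hrz
  have hcons := conservation A B R hBsymm hRsymm hu hv
  simp only [hz1, hz0, h02, h12, zero_dotProduct, dotProduct_zero, sub_zero, zero_sub,
    neg_eq_zero] at hcons
  have h11' : (u 1).1 = 0 := dotProduct_self_eq_zero.mp (by linarith [hcons])
  have hu1 : u 1 = 0 := by
    rw [Prod.ext_iff]
    exact ⟨by simpa using h11', by simpa using h12⟩
  have hz : PairSol A B R (fun _ => (0 : EE n)) := PairSol.zero A B R
  have heq := unique_one (sysF A B R) (sysF_cont A B R hA hB hR) hu hz hu1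
  intro t ht
  exact heq ht


end Sys

end JacobiAux
end

/-- Warner's regularity condition (R2) in coordinates: the map `W → ℝⁿ/A₁`,
`(p,x) ↦ [p(1)]`, is injective and onto, hence a linear isomorphism. -/
theorem stmt_3 {n : ℕ} (A B R : ℝ → Matrix (Fin n) (Fin n) ℝ)
    (hA : Continuous A) (hB : Continuous B) (hR : Continuous R)
    (hBsymm : ∀ t, (B t).IsSymm) (hRsymm : ∀ t, (R t).IsSymm) :
    -- injectivity: two elements of `W` whose values `p(1)` agree modulo `A₁` coincide
    (∀ p x q y : ℝ → Fin n → ℝ,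
      IsJacobiSol n A B R p x → x 0 = 0 → x 1 = 0 →
      IsJacobiSol n A B R q y → y 0 = 0 → y 1 = 0 →
      p 1 - q 1 ∈ Aone n A B R →
      ∀ t ∈ Icc (0:ℝ) 1, p t = q t ∧ x t = y t) ∧
    -- surjectivity onto the quotient `ℝⁿ/A₁`
    (∀ v : Fin n → ℝ, ∃ p x : ℝ → Fin n → ℝ,
      IsJacobiSol n A B R p x ∧ x 0 = 0 ∧ x 1 = 0 ∧ v - p 1 ∈ Aone n A B R) := by
  classical
  open JacobiAux in
  have hFc : Continuous (sysF A B R) := sysF_cont A B R hA hB hR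
  choose sol hsol0 hsolP using fun v₀ : EE n => exists_sol (sysF A B R) hFc v₀
  have hsolP' : ∀ v₀ : EE n, PairSol A B R (sol v₀) := hsolP
  -- the end map is linear
  have hadd : ∀ v w : EE n, sol (v + w) 1 = sol v 1 + sol w 1 := by
    intro v w
    have h1 : PairSol A B R (fun t => sol v t + sol w t) :=
      PairSol.add A B R (hsolP' v) (hsolP' w)
    have := unique_zero (sysF A B R) hFc (hsolP' (v + w)) h1
      (by simp [hsol0])
    exact this (show (1:ℝ) ∈ Icc 0 1 from ⟨zero_le_one, le_rfl⟩)
  have hsmul : ∀ (c : ℝ) (v : EE n), sol (c • v) 1 = c • sol v 1 := by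
    intro c v
    have h1 : PairSol A B R (fun t => c • sol v t) := PairSol.smul A B R c (hsolP' v)
    have := unique_zero (sysF A B R) hFc (hsolP' (c • v)) h1 (by simp [hsol0])
    exact this (show (1:ℝ) ∈ Icc 0 1 from ⟨zero_le_one, le_rfl⟩)
  let L : EE n →ₗ[ℝ] EE n :=
    { toFun := fun v => sol v 1
      map_add' := hadd
      map_smul' := hsmul }
  let P : (Fin n → ℝ) →ₗ[ℝ] (Fin n → ℝ) :=
    (LinearMap.fst ℝ _ _).comp (L.comp (LinearMap.inl ℝ _ _))
  let X : (Fin n → ℝ) →ₗ[ℝ] (Fin n → ℝ) :=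
    (LinearMap.snd ℝ _ _).comp (L.comp (LinearMap.inl ℝ _ _))
  have hPdef : ∀ k, P k = (sol (k, 0) 1).1 := fun k => rfl
  have hXdef : ∀ k, X k = (sol (k, 0) 1).2 := fun k => rfl
  -- `A₁` is the range of `X`
  have hAone : Aone n A B R = ↑(LinearMap.range X) := by
    ext v
    constructor
    · rintro ⟨p, x, hsol', h0, h1⟩
      have hp : PairSol A B R (fun t => (p t, x t)) := (pairSol_iff A B R p x).mp hsol'
      have heq := unique_zero (sysF A B R) hFc hp (hsolP' (p 0, 0))
        (by simp [hsol0, h0])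
      have h1' := heq (show (1:ℝ) ∈ Icc 0 1 from ⟨zero_le_one, le_rfl⟩)
      refine ⟨p 0, ?_⟩
      rw [hXdef, ← h1]
      exact (congrArg Prod.snd h1').symm
    · rintro ⟨k, rfl⟩
      exact ⟨fun t => (sol (k, 0) t).1, fun t => (sol (k, 0) t).2,
        pairSol_fst_snd A B R (hsolP' _), by simp [hsol0], rfl⟩
  have hvan : ∀ (u : ℝ → EE n), PairSol A B R u → (u 0).2 = 0 → (u 1).2 = 0 →
      (u 1).1 ∈ Aone n A B R → ∀ t ∈ Icc (0:ℝ) 1, u t = 0 :=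
    fun u hu h1 h2 h3 => vanish A B R hA hB hR hBsymm hRsymm hu h1 h2 h3
  constructor
  · -- injectivity
    intro p x q y hpx hx0 hx1 hqy hy0 hy1 hmem t ht
    have h1 : PairSol A B R (fun t => (p t, x t)) := (pairSol_iff A B R p x).mp hpx
    have h2 : PairSol A B R (fun t => (q t, y t)) := (pairSol_iff A B R q y).mp hqy
    have hw : PairSol A B R (fun t => (p t, x t) - (q t, y t)) :=
      PairSol.sub A B R h1 h2
    have hv := hvan _ hw (by simp [hx0, hy0]) (by simp [hx1, hy1]) (by simpa using hmem) t ht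
    have hv1 : p t - q t = 0 := congrArg Prod.fst hv
    have hv2 : x t - y t = 0 := congrArg Prod.snd hv
    exact ⟨sub_eq_zero.mp hv1, sub_eq_zero.mp hv2⟩
  · -- surjectivity
    intro v
    set K : Submodule ℝ (Fin n → ℝ) := LinearMap.ker X with hK
    set Q : Submodule ℝ (Fin n → ℝ) := Submodule.map P K with hQ
    -- key: if X k = 0 and P k ∈ range X then k = 0
    have hkey : ∀ k : Fin n → ℝ, X k = 0 → P k ∈ LinearMap.range X → k = 0 := by
      intro k hk hPk
      have h0 : ((sol (k, 0)) 0).2 = 0 := by rw [hsol0]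
      have h12 : (sol (k, 0) 1).2 = 0 := by rw [← hXdef]; exact hk
      have h11 : (sol (k, 0) 1).1 ∈ Aone n A B R := by
        rw [hAone, ← hPdef]; exact hPk
      have := hvan _ (hsolP' (k, 0)) h0 h12 h11 0 ⟨le_rfl, zero_le_one⟩
      rw [hsol0] at this
      exact congrArg Prod.fst this
    have hdisj : Q ⊓ LinearMap.range X = ⊥ := by
      rw [eq_bot_iff]
      rintro w ⟨hwQ, hwX⟩
      obtain ⟨k, hk, rfl⟩ := hwQ
      have hk0 : k = 0 := hkey k hk hwX
      simp [hk0]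
    have hinj : Function.Injective (P.domRestrict K) := by
      rw [← LinearMap.ker_eq_bot, eq_bot_iff]
      rintro ⟨k, hk⟩ hker
      have hPk : P k = 0 := hker
      have hk0 : k = 0 := hkey k hk (by rw [hPk]; exact zero_mem _)
      simp [hk0]
    have hrank1 : Module.finrank ℝ Q = Module.finrank ℝ K := by
      rw [hQ, ← LinearMap.range_domRestrict]
      exact LinearMap.finrank_range_of_inj hinj
    have hrank2 : Module.finrank ℝ (LinearMap.range X) + Module.finrank ℝ K = n := by
      have := LinearMap.finrank_range_add_finrank_ker X
      simpa using this
    have hsup : Q ⊔ LinearMap.range X = ⊤ := by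
      apply Submodule.eq_top_of_finrank_eq
      have h5 := Submodule.finrank_sup_add_finrank_inf_eq Q (LinearMap.range X)
      rw [hdisj] at h5
      simp only [finrank_bot, add_zero] at h5
      rw [h5, hrank1]
      have hn : Module.finrank ℝ (Fin n → ℝ) = n := by simp
      rw [hn]
      omega
    obtain ⟨w, hwQ, z, hz, hsum⟩ :=
      Submodule.mem_sup.mp (hsup ▸ Submodule.mem_top : v ∈ Q ⊔ LinearMap.range X)
    obtain ⟨k, hk, rfl⟩ := hwQ
    refine ⟨fun t => (sol (k, 0) t).1, fun t => (sol (k, 0) t).2,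
      pairSol_fst_snd A B R (hsolP' _), by simp [hsol0], ?_, ?_⟩
    · show (sol (k, 0) 1).2 = 0
      rw [← hXdef]; exact hk
    · have hvz : v - P k = z := by
        rw [← hsum]; abel
      rw [hAone]
      show v - (sol (k, 0) 1).1 ∈ LinearMap.range X
      rw [← hPdef, hvz]
      exact hz
end

section
/- Every conjugate vector λ₀ ∈ T*_p(ℍ) with H(λ₀) ≠ 0 of the Heisenberg exponential map has order exactly one, i.e. dim Ker(d_{λ₀} exp_p) = 1. -/
open Real Filter Topology Module

set_option maxHeartbeats 1000000


/-- The sub-Riemannian exponential map of the 3-dimensional Heisenberg group at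
the base point `p = (x₀, y₀, τ₀)`, applied to the covector `λ = (u, v, α)`. -/
noncomputable def heisExp (x₀ y₀ τ₀ : ℝ) (lam : ℝ × ℝ × ℝ) : ℝ × ℝ × ℝ :=
  let u := lam.1; let v := lam.2.1; let α := lam.2.2
  let z₀ : ℂ := ⟨x₀, y₀⟩
  let w₀ : ℂ := ⟨u, v⟩
  if α = 0 then (x₀ + u, y₀ + v, τ₀ + (x₀ * v - y₀ * u) / 2)
  else
    let z1 : ℂ := w₀ / (Complex.I * α) * (Complex.exp (Complex.I * α) - 1)
      + z₀ / 2 * (Complex.exp (Complex.I * α) + 1)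
    (z1.re, z1.im,
      τ₀ + ((starRingEnd ℂ) z₀ * w₀).im / 2
        + ((starRingEnd ℂ) z₀ * w₀).re * (1 - Real.cos α) / (2 * α)
        + ‖z₀‖^2 * (α + Real.sin α) / 8
        + ‖w₀‖^2 * (α - Real.sin α) / (2 * α^2))


noncomputable def AA (α : ℝ) : ℝ := if α = 0 then 1 else Real.sin α / α
noncomputable def BB (α : ℝ) : ℝ := if α = 0 then 0 else (1 - Real.cos α) / α
noncomputable def DD (α : ℝ) : ℝ := if α = 0 then 0 else (α - Real.sin α) / (2 * α ^ 2)
noncomputable def AA' (α : ℝ) : ℝ := if α = 0 then 0 else (α * Real.cos α - Real.sin α) / α ^ 2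
noncomputable def BB' (α : ℝ) : ℝ := if α = 0 then 1/2 else (α * Real.sin α - (1 - Real.cos α)) / α ^ 2
noncomputable def DD' (α : ℝ) : ℝ := if α = 0 then 1/12 else ((1 - Real.cos α) * α - 2 * (α - Real.sin α)) / (2 * α ^ 3)



lemma hasDerivAt_of_quad (f : ℝ → ℝ) (L C : ℝ) (h0 : f 0 = 0)
    (h : ∀ α : ℝ, α ≠ 0 → |α| ≤ 1 → |f α - L * α| ≤ C * α ^ 2) : HasDerivAt f L 0 := by
  rw [hasDerivAt_iff_tendsto_slope]
  have hb : ∀ᶠ α in 𝓝[≠] (0:ℝ), ‖slope f 0 α - L‖ ≤ C * |α| := by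
    filter_upwards [self_mem_nhdsWithin,
      nhdsWithin_le_nhds (Metric.ball_mem_nhds (0:ℝ) one_pos)] with α hα hball
    have hα0 : α ≠ 0 := hα
    have h1 : |α| ≤ 1 := le_of_lt (by simpa [Real.dist_eq] using hball)
    have h2 := h α hα0 h1
    have he : slope f 0 α - L = (f α - L * α) / α := by
      rw [slope_def_field, h0]; field_simp; ring
    rw [Real.norm_eq_abs, he, abs_div]
    have h3 : |f α - L * α| / |α| ≤ (C * α ^ 2) / |α| := by gcongr
    refine h3.trans_eq ?_
    rw [show α ^ 2 = |α| * |α| by rw [← sq_abs, sq]]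
    field_simp
  have h0' : Tendsto (fun α => slope f 0 α - L) (𝓝[≠] (0:ℝ)) (𝓝 0) := by
    apply squeeze_zero_norm' hb
    have : Tendsto (fun α : ℝ => C * |α|) (𝓝 (0:ℝ)) (𝓝 (C * |0|)) :=
      (continuous_const.mul continuous_abs).tendsto 0
    simpa using this.mono_left nhdsWithin_le_nhds
  simpa using h0'.add (tendsto_const_nhds (x := L))


lemma sin_taylor (α : ℝ) (h1 : |α| ≤ 1) : |Real.sin α - (α - α^3/6)| ≤ |α|^3 := by
  have := Real.sin_bound h1
  have h4 : |α|^4 ≤ |α|^3 := by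
    have := abs_nonneg α
    calc |α|^4 = |α|^3 * |α| := by ring
      _ ≤ |α|^3 * 1 := by nlinarith [pow_nonneg (abs_nonneg α) 3]
      _ = |α|^3 := by ring
  nlinarith [pow_nonneg (abs_nonneg α) 3, pow_le_pow_of_le_one (abs_nonneg α) h1 (show 3 ≤ 5 by norm_num)]


lemma hasDerivAt_AA (α : ℝ) : HasDerivAt AA (AA' α) α := by
  rcases eq_or_ne α 0 with rfl | hα
  · rw [AA', if_pos rfl]
    have h0 : (fun x => AA x - 1) 0 = 0 := by simp [AA]
    have key := hasDerivAt_of_quad (fun x => AA x - 1) 0 2 h0 ?_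
    · simpa using key.add_const 1
    · intro x hx h1
      have hs := sin_taylor x h1
      simp only [AA, if_neg hx]
      have heq : Real.sin x / x - 1 - 0 * x = (Real.sin x - (x - x^3/6)) / x + (-(x^2)/6) := by
        field_simp; ring
      rw [heq]
      have e1 : |(Real.sin x - (x - x^3/6)) / x| ≤ x^2 := by
        rw [abs_div, div_le_iff₀ (abs_pos.2 hx)]
        calc |Real.sin x - (x - x^3/6)| ≤ |x|^3 := hs
          _ = x^2 * |x| := by rw [pow_succ, sq_abs]
      have e2 : |(-(x^2)/6)| = x^2/6 := by
        rw [abs_div, abs_neg, abs_of_nonneg (sq_nonneg x)]; norm_num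
      calc |(Real.sin x - (x - x^3/6)) / x + (-(x^2)/6)|
          ≤ |(Real.sin x - (x - x^3/6)) / x| + |(-(x^2)/6)| := abs_add_le _ _
        _ ≤ x^2 + x^2/6 := by rw [e2]; gcongr
        _ ≤ 2 * x^2 := by nlinarith [sq_nonneg x]
  · have hev : AA =ᶠ[nhds α] fun x => Real.sin x / x := by
      filter_upwards [isOpen_ne.mem_nhds hα] with x hx
      simp [AA, if_neg hx]
    have hd : HasDerivAt (fun x => Real.sin x / x)
        ((Real.cos α * α - Real.sin α * 1) / α ^ 2) α :=
      (Real.hasDerivAt_sin α).div (hasDerivAt_id α) hα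
    have h2 : HasDerivAt AA ((Real.cos α * α - Real.sin α * 1) / α ^ 2) α :=
      hd.congr_of_eventuallyEq hev
    rw [AA', if_neg hα, show (α * Real.cos α - Real.sin α) / α ^ 2
      = (Real.cos α * α - Real.sin α * 1) / α ^ 2 from by ring]
    exact h2

lemma hasDerivAt_BB (α : ℝ) : HasDerivAt BB (BB' α) α := by
  rcases eq_or_ne α 0 with rfl | hα
  · rw [BB', if_pos rfl]
    apply hasDerivAt_of_quad BB (1/2) 1 (by simp [BB])
    intro x hx h1
    have hc := Real.cos_bound h1
    simp only [BB, if_neg hx]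
    have heq : (1 - Real.cos x) / x - 1/2 * x = -(Real.cos x - (1 - x^2/2)) / x := by
      field_simp; ring
    rw [heq, abs_div, abs_neg, div_le_iff₀ (abs_pos.2 hx)]
    calc |Real.cos x - (1 - x^2/2)| ≤ |x|^4 * (5/96) := hc
      _ ≤ |x|^3 := by
          have h2 : |x|^4 ≤ |x|^3 := by
            calc |x|^4 = |x|^3 * |x| := by ring
              _ ≤ |x|^3 * 1 := by nlinarith [pow_nonneg (abs_nonneg x) 3]
              _ = |x|^3 := by ring
          nlinarith [pow_nonneg (abs_nonneg x) 4]
      _ = x^2 * |x| := by rw [pow_succ, sq_abs]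
      _ = 1 * x^2 * |x| := by ring
  · have hev : BB =ᶠ[nhds α] fun x => (1 - Real.cos x) / x := by
      filter_upwards [isOpen_ne.mem_nhds hα] with x hx
      simp [BB, if_neg hx]
    have hd : HasDerivAt (fun x => (1 - Real.cos x) / x)
        (((0 - -Real.sin α) * α - (1 - Real.cos α) * 1) / α ^ 2) α :=
      ((hasDerivAt_const α 1).sub (Real.hasDerivAt_cos α)).div (hasDerivAt_id α) hα
    have h2 := hd.congr_of_eventuallyEq hev
    rw [BB', if_neg hα, show (α * Real.sin α - (1 - Real.cos α)) / α ^ 2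
      = ((0 - -Real.sin α) * α - (1 - Real.cos α) * 1) / α ^ 2 from by ring]
    exact h2

lemma hasDerivAt_DD (α : ℝ) : HasDerivAt DD (DD' α) α := by
  rcases eq_or_ne α 0 with rfl | hα
  · rw [DD', if_pos rfl]
    apply hasDerivAt_of_quad DD (1/12) 1 (by simp [DD])
    intro x hx h1
    have hs := Real.sin_bound h1
    simp only [DD, if_neg hx]
    have hx2 : x^2 ≠ 0 := pow_ne_zero 2 hx
    have heq : (x - Real.sin x) / (2 * x^2) - 1/12 * x
        = -(Real.sin x - (x - x^3/6)) / (2 * x^2) := by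
      field_simp; ring
    rw [heq, abs_div, abs_neg, div_le_iff₀ (by positivity : (0:ℝ) < |2 * x^2|)]
    have habs : |2 * x^2| = 2 * x^2 := abs_of_pos (by positivity)
    calc |Real.sin x - (x - x^3/6)| ≤ |x|^4 * (5/96) := by
          have := pow_le_pow_of_le_one (abs_nonneg x) h1 (show 4 ≤ 5 by norm_num)
          nlinarith [pow_nonneg (abs_nonneg x) 4]
      _ ≤ |x|^4 := by nlinarith [pow_nonneg (abs_nonneg x) 4]
      _ = (x^2) * (x^2) := by rw [show (4:ℕ) = 2*2 from rfl, pow_mul, sq_abs]; ring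
      _ ≤ 1 * x^2 * |2 * x^2| := by rw [habs]; nlinarith [sq_nonneg x]
  · have hev : DD =ᶠ[nhds α] fun x => (x - Real.sin x) / (2 * x^2) := by
      filter_upwards [isOpen_ne.mem_nhds hα] with x hx
      simp [DD, if_neg hx]
    have hden : HasDerivAt (fun x : ℝ => 2 * x^2) (2 * (2 * α)) α := by
      simpa using ((hasDerivAt_pow 2 α).const_mul 2)
    have hd : HasDerivAt (fun x => (x - Real.sin x) / (2 * x^2))
        (((1 - Real.cos α) * (2 * α^2) - (α - Real.sin α) * (2 * (2 * α))) / (2 * α^2)^2) α :=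
      ((hasDerivAt_id α).sub (Real.hasDerivAt_sin α)).div hden (by positivity)
    have h2 := hd.congr_of_eventuallyEq hev
    rw [DD', if_neg hα, show ((1 - Real.cos α) * α - 2 * (α - Real.sin α)) / (2 * α ^ 3)
      = ((1 - Real.cos α) * (2 * α^2) - (α - Real.sin α) * (2 * (2 * α))) / (2 * α^2)^2 from by
        field_simp]
    exact h2


noncomputable def Phi (x₀ y₀ τ₀ : ℝ) (p : ℝ × ℝ × ℝ) : ℝ × ℝ × ℝ :=
  (p.1 * AA p.2.2 - p.2.1 * BB p.2.2
      + (x₀ * (1 + Real.cos p.2.2) - y₀ * Real.sin p.2.2) / 2,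
   p.1 * BB p.2.2 + p.2.1 * AA p.2.2
      + (y₀ * (1 + Real.cos p.2.2) + x₀ * Real.sin p.2.2) / 2,
   τ₀ + (x₀ * p.2.1 - y₀ * p.1) / 2 + (x₀ * p.1 + y₀ * p.2.1) * BB p.2.2 / 2
      + (x₀^2 + y₀^2) * (p.2.2 + Real.sin p.2.2) / 8 + (p.1^2 + p.2.1^2) * DD p.2.2)

lemma heisExp_eq_Phi (x₀ y₀ τ₀ : ℝ) : heisExp x₀ y₀ τ₀ = Phi x₀ y₀ τ₀ := by
  funext p
  obtain ⟨u, v, α⟩ := p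
  rcases eq_or_ne α 0 with rfl | hα
  · simp [heisExp, Phi, AA, BB, DD]
    constructor <;> ring
  · have hIα : Complex.I * (α : ℂ) ≠ 0 := by simp [Complex.ext_iff, hα]
    have hexp : Complex.exp (Complex.I * α) = ⟨Real.cos α, Real.sin α⟩ := by
      rw [mul_comm, Complex.exp_mul_I]
      apply Complex.ext <;> simp [Complex.cos_ofReal_re, Complex.sin_ofReal_re]
    simp only [heisExp, Phi, if_neg hα]
    have hz1 : ((⟨u, v⟩ : ℂ) / (Complex.I * α) * (Complex.exp (Complex.I * α) - 1)
        + (⟨x₀, y₀⟩ : ℂ) / 2 * (Complex.exp (Complex.I * α) + 1))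
        = ⟨u * AA α - v * BB α + (x₀ * (1 + Real.cos α) - y₀ * Real.sin α) / 2,
           u * BB α + v * AA α + (y₀ * (1 + Real.cos α) + x₀ * Real.sin α) / 2⟩ := by
      rw [hexp]
      apply Complex.ext <;>
        simp [Complex.div_re, Complex.div_im, Complex.mul_re, Complex.mul_im,
          Complex.normSq_mk, Complex.normSq_mul, Complex.normSq_I, AA, BB, if_neg hα] <;>
        field_simp <;> ring
    rw [hz1]
    simp only [AA, BB, DD, if_neg hα]
    refine Prod.ext rfl (Prod.ext rfl ?_)
    simp [Complex.mul_re, Complex.mul_im, Complex.sq_norm, Complex.normSq_mk]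
    field_simp
    ring


noncomputable def row (a b c : ℝ) : (ℝ × ℝ × ℝ) →L[ℝ] ℝ :=
  a • (ContinuousLinearMap.fst ℝ ℝ (ℝ × ℝ))
  + b • ((ContinuousLinearMap.fst ℝ ℝ ℝ).comp (ContinuousLinearMap.snd ℝ ℝ (ℝ × ℝ)))
  + c • ((ContinuousLinearMap.snd ℝ ℝ ℝ).comp (ContinuousLinearMap.snd ℝ ℝ (ℝ × ℝ)))

@[simp] lemma row_apply (a b c : ℝ) (q : ℝ × ℝ × ℝ) :
    row a b c q = a * q.1 + b * q.2.1 + c * q.2.2 := by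
  simp [row]

noncomputable def jac (a b c d e f g h i : ℝ) : (ℝ × ℝ × ℝ) →L[ℝ] (ℝ × ℝ × ℝ) :=
  (row a b c).prod ((row d e f).prod (row g h i))

@[simp] lemma jac_apply (a b c d e f g h i : ℝ) (q : ℝ × ℝ × ℝ) :
    jac a b c d e f g h i q
      = (a * q.1 + b * q.2.1 + c * q.2.2,
         d * q.1 + e * q.2.1 + f * q.2.2,
         g * q.1 + h * q.2.1 + i * q.2.2) := by
  simp [jac]

lemma hasFDerivAt_Phi (x₀ y₀ τ₀ u v α : ℝ) :
    HasFDerivAt (Phi x₀ y₀ τ₀)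
      (jac (AA α) (-BB α) (u * AA' α - v * BB' α - (x₀ * Real.sin α + y₀ * Real.cos α) / 2)
           (BB α) (AA α) (u * BB' α + v * AA' α + (x₀ * Real.cos α - y₀ * Real.sin α) / 2)
           (-y₀/2 + x₀ * BB α / 2 + 2 * u * DD α)
           (x₀/2 + y₀ * BB α / 2 + 2 * v * DD α)
           ((x₀ * u + y₀ * v) * BB' α / 2 + (x₀^2 + y₀^2) * (1 + Real.cos α) / 8
             + (u^2 + v^2) * DD' α))
      (u, v, α) := by
  set p : ℝ × ℝ × ℝ := (u, v, α)
  have h3 : HasFDerivAt (fun q : ℝ × ℝ × ℝ => q.2.2)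
      ((ContinuousLinearMap.snd ℝ ℝ ℝ).comp (ContinuousLinearMap.snd ℝ ℝ (ℝ × ℝ))) p :=
    (hasFDerivAt_snd).comp p hasFDerivAt_snd
  have h2 : HasFDerivAt (fun q : ℝ × ℝ × ℝ => q.2.1)
      ((ContinuousLinearMap.fst ℝ ℝ ℝ).comp (ContinuousLinearMap.snd ℝ ℝ (ℝ × ℝ))) p :=
    (hasFDerivAt_fst).comp p hasFDerivAt_snd
  have h1 : HasFDerivAt (fun q : ℝ × ℝ × ℝ => q.1)
      (ContinuousLinearMap.fst ℝ ℝ (ℝ × ℝ)) p := hasFDerivAt_fst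
  have hA := (hasDerivAt_AA α).comp_hasFDerivAt p h3
  have hB := (hasDerivAt_BB α).comp_hasFDerivAt p h3
  have hD := (hasDerivAt_DD α).comp_hasFDerivAt p h3
  have hsin := (Real.hasDerivAt_sin α).comp_hasFDerivAt p h3
  have hcos := (Real.hasDerivAt_cos α).comp_hasFDerivAt p h3
  have hc1 := ((h1.mul hA).sub (h2.mul hB)).add
    ((((hasFDerivAt_const x₀ p).mul ((hasFDerivAt_const (1:ℝ) p).add hcos)).sub
      ((hasFDerivAt_const y₀ p).mul hsin)).mul (hasFDerivAt_const (2:ℝ)⁻¹ p))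
  have hc2 := ((h1.mul hB).add (h2.mul hA)).add
    ((((hasFDerivAt_const y₀ p).mul ((hasFDerivAt_const (1:ℝ) p).add hcos)).add
      ((hasFDerivAt_const x₀ p).mul hsin)).mul (hasFDerivAt_const (2:ℝ)⁻¹ p))
  have hc3 := (((((hasFDerivAt_const τ₀ p).add
      ((((hasFDerivAt_const x₀ p).mul h2).sub ((hasFDerivAt_const y₀ p).mul h1)).mul (hasFDerivAt_const (2:ℝ)⁻¹ p))).add
      (((((hasFDerivAt_const x₀ p).mul h1).add ((hasFDerivAt_const y₀ p).mul h2)).mul hB).mul (hasFDerivAt_const (2:ℝ)⁻¹ p))).add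
      ((((hasFDerivAt_const (x₀^2+y₀^2) p).mul (h3.add hsin))).mul (hasFDerivAt_const (8:ℝ)⁻¹ p))).add
      (((h1.mul h1).add (h2.mul h2)).mul hD))
  have hh := (hc1.prodMk (hc2.prodMk hc3))
  refine (hh.congr_of_eventuallyEq ?_).congr_fderiv ?_
  · filter_upwards with q
    simp only [Phi, pow_two, div_eq_mul_inv, Function.comp, Pi.mul_apply, Pi.add_apply, Pi.sub_apply]
  · refine ContinuousLinearMap.ext fun q => ?_
    simp only [jac_apply, ContinuousLinearMap.add_apply, ContinuousLinearMap.sub_apply,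
      ContinuousLinearMap.smul_apply, ContinuousLinearMap.prod_apply,
      ContinuousLinearMap.comp_apply, ContinuousLinearMap.coe_fst',
      ContinuousLinearMap.coe_snd', ContinuousLinearMap.zero_apply, smul_eq_mul,
      Function.comp_apply, Prod.mk.injEq, Pi.mul_apply, Pi.add_apply, Pi.sub_apply, Pi.pow_apply]
    refine ⟨?_, ?_, ?_⟩ <;> ring


lemma ker_lemma (L : (ℝ×ℝ×ℝ) →L[ℝ] (ℝ×ℝ×ℝ)) (hL : ¬ Function.Injective L)
    (pr : (ℝ×ℝ×ℝ) →ₗ[ℝ] ℝ × ℝ)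
    (hs : Function.Surjective (pr ∘ₗ (L : (ℝ×ℝ×ℝ) →ₗ[ℝ] ℝ×ℝ×ℝ))) :
    Module.finrank ℝ (LinearMap.ker (L : (ℝ×ℝ×ℝ) →ₗ[ℝ] ℝ×ℝ×ℝ)) = 1 := by
  have hk : LinearMap.ker (L : (ℝ×ℝ×ℝ) →ₗ[ℝ] ℝ×ℝ×ℝ) ≤ LinearMap.ker (pr ∘ₗ (L : (ℝ×ℝ×ℝ) →ₗ[ℝ] ℝ×ℝ×ℝ)) := by
    intro w hw
    rw [LinearMap.mem_ker] at *
    simp only [LinearMap.comp_apply, ContinuousLinearMap.coe_coe, hw, map_zero]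
  have hr : Module.finrank ℝ (LinearMap.range (pr ∘ₗ (L : (ℝ×ℝ×ℝ) →ₗ[ℝ] ℝ×ℝ×ℝ))) = 2 := by
    rw [LinearMap.range_eq_top.2 hs]
    simp [finrank_top, Module.finrank_prod]
  have hsum := LinearMap.finrank_range_add_finrank_ker (pr ∘ₗ (L : (ℝ×ℝ×ℝ) →ₗ[ℝ] ℝ×ℝ×ℝ))
  have hdom : Module.finrank ℝ (ℝ×ℝ×ℝ) = 3 := by simp [Module.finrank_prod]
  have h1 : Module.finrank ℝ (LinearMap.ker (pr ∘ₗ (L : (ℝ×ℝ×ℝ) →ₗ[ℝ] ℝ×ℝ×ℝ))) = 1 := by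
    omega
  have hle := h1 ▸ Submodule.finrank_mono hk
  have hne : LinearMap.ker (L : (ℝ×ℝ×ℝ) →ₗ[ℝ] ℝ×ℝ×ℝ) ≠ ⊥ := by
    intro hbot
    exact hL (LinearMap.ker_eq_bot.1 hbot)
  have hpos : 0 < Module.finrank ℝ (LinearMap.ker (L : (ℝ×ℝ×ℝ) →ₗ[ℝ] ℝ×ℝ×ℝ)) := by
    rw [Module.finrank_pos_iff]
    exact Submodule.nontrivial_iff_ne_bot.2 hne
  omega


/-- Every conjugate vector `λ₀` with `H(λ₀) ≠ 0` of the Heisenberg exponential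
map has order exactly one: `dim Ker(d_{λ₀} exp_p) = 1`. -/
theorem stmt_13 (x₀ y₀ τ₀ u₀ v₀ α₀ : ℝ)
    (hH : (1/2) * ((v₀ + α₀ * x₀ / 2)^2 + (u₀ - α₀ * y₀ / 2)^2) ≠ 0)
    (hconj : ¬ Function.Injective (fderiv ℝ (heisExp x₀ y₀ τ₀) (u₀, v₀, α₀))) :
    Module.finrank ℝ
      (LinearMap.ker (fderiv ℝ (heisExp x₀ y₀ τ₀) (u₀, v₀, α₀) : ℝ × ℝ × ℝ →ₗ[ℝ] ℝ × ℝ × ℝ)) = 1 := by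
  rw [heisExp_eq_Phi] at hconj ⊢
  have hF := hasFDerivAt_Phi x₀ y₀ τ₀ u₀ v₀ α₀
  rw [hF.fderiv] at hconj ⊢
  rcases eq_or_ne (AA α₀ ^ 2 + BB α₀ ^ 2) 0 with hAB | hAB
  · -- AA α₀ = 0 and BB α₀ = 0, the case α₀ = 2πk
    have hA0 : AA α₀ = 0 := by nlinarith [sq_nonneg (AA α₀), sq_nonneg (BB α₀)]
    have hB0 : BB α₀ = 0 := by nlinarith [sq_nonneg (AA α₀), sq_nonneg (BB α₀)]
    have hα0 : α₀ ≠ 0 := by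
      intro h; rw [AA, if_pos h] at hA0; norm_num at hA0
    have hsin : Real.sin α₀ = 0 := by
      rw [AA, if_neg hα0, div_eq_zero_iff] at hA0; tauto
    have hcos : Real.cos α₀ = 1 := by
      rw [BB, if_neg hα0, div_eq_zero_iff] at hB0
      rcases hB0 with h | h
      · linarith
      · exact absurd h hα0
    have hA' : AA' α₀ = 1 / α₀ := by
      rw [AA', if_neg hα0, hsin, hcos]; field_simp; ring
    have hB' : BB' α₀ = 0 := by
      rw [BB', if_neg hα0, hsin, hcos]; simp
    have hD : DD α₀ = 1 / (2 * α₀) := by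
      rw [DD, if_neg hα0, hsin]; field_simp; ring
    have hor : u₀ - α₀ * y₀ / 2 ≠ 0 ∨ v₀ + α₀ * x₀ / 2 ≠ 0 := by
      by_contra hcon
      push_neg at hcon
      apply hH
      rw [hcon.1, hcon.2]; ring
    rcases hor with hu | hv
    · -- use coordinates 1 and 3
      set m := u₀ / α₀ - y₀ / 2 with hm
      have hm0 : m ≠ 0 := by
        rw [hm]
        intro h
        apply hu
        field_simp at h
        field_simp
        linarith
      set M := (x₀ * u₀ + y₀ * v₀) * BB' α₀ / 2 + (x₀^2 + y₀^2) * (1 + Real.cos α₀) / 8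
        + (u₀^2 + v₀^2) * DD' α₀ with hM
      apply ker_lemma _ hconj
        ((LinearMap.fst ℝ ℝ (ℝ × ℝ)).prod
          ((LinearMap.snd ℝ ℝ ℝ).comp (LinearMap.snd ℝ ℝ (ℝ × ℝ))))
      rintro ⟨a, b⟩
      refine ⟨((b - M * (a / m)) / m, 0, a / m), ?_⟩
      have e13 : u₀ * AA' α₀ - v₀ * BB' α₀ - (x₀ * Real.sin α₀ + y₀ * Real.cos α₀) / 2 = m := by
        rw [hA', hB', hsin, hcos, hm]; field_simp; ring
      have e31 : -y₀/2 + x₀ * BB α₀ / 2 + 2 * u₀ * DD α₀ = m := by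
        rw [hB0, hD, hm]; field_simp; ring
      have e32 : x₀/2 + y₀ * BB α₀ / 2 + 2 * v₀ * DD α₀ = x₀/2 + v₀/α₀ := by
        rw [hB0, hD]; field_simp; ring
      simp only [LinearMap.comp_apply, ContinuousLinearMap.coe_coe, jac_apply,
        LinearMap.prod_apply, Function.prod, LinearMap.fst_apply, LinearMap.snd_apply]
      rw [e13, e31, e32, hA0, hB0]
      simp only [Prod.mk.injEq]
      constructor
      · field_simp; ring
      · field_simp; ring
    · -- use coordinates 2 and 3
      set m := v₀ / α₀ + x₀ / 2 with hm
      have hm0 : m ≠ 0 := by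
        rw [hm]
        intro h
        apply hv
        field_simp at h
        field_simp
        linarith
      set M := (x₀ * u₀ + y₀ * v₀) * BB' α₀ / 2 + (x₀^2 + y₀^2) * (1 + Real.cos α₀) / 8
        + (u₀^2 + v₀^2) * DD' α₀ with hM
      apply ker_lemma _ hconj
        (((LinearMap.fst ℝ ℝ ℝ).comp (LinearMap.snd ℝ ℝ (ℝ × ℝ))).prod
          ((LinearMap.snd ℝ ℝ ℝ).comp (LinearMap.snd ℝ ℝ (ℝ × ℝ))))
      rintro ⟨a, b⟩
      refine ⟨(0, (b - M * (a / m)) / m, a / m), ?_⟩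
      have e23 : u₀ * BB' α₀ + v₀ * AA' α₀ + (x₀ * Real.cos α₀ - y₀ * Real.sin α₀) / 2 = m := by
        rw [hA', hB', hsin, hcos, hm]; field_simp; ring
      have e31 : -y₀/2 + x₀ * BB α₀ / 2 + 2 * u₀ * DD α₀ = -y₀/2 + u₀/α₀ := by
        rw [hB0, hD]; field_simp; ring
      have e32 : x₀/2 + y₀ * BB α₀ / 2 + 2 * v₀ * DD α₀ = m := by
        rw [hB0, hD, hm]; field_simp; ring
      simp only [LinearMap.comp_apply, ContinuousLinearMap.coe_coe, jac_apply,
        LinearMap.prod_apply, Function.prod, LinearMap.fst_apply, LinearMap.snd_apply]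
      rw [e23, e31, e32, hA0, hB0]
      simp only [Prod.mk.injEq]
      constructor
      · field_simp; ring
      · field_simp; ring
  · -- the 2x2 block case
    apply ker_lemma _ hconj
      ((LinearMap.fst ℝ ℝ (ℝ × ℝ)).prod
        ((LinearMap.fst ℝ ℝ ℝ).comp (LinearMap.snd ℝ ℝ (ℝ × ℝ))))
    rintro ⟨a, b⟩
    refine ⟨((a * AA α₀ + b * BB α₀) / (AA α₀ ^ 2 + BB α₀ ^ 2),
             (b * AA α₀ - a * BB α₀) / (AA α₀ ^ 2 + BB α₀ ^ 2), 0), ?_⟩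
    simp only [LinearMap.comp_apply, ContinuousLinearMap.coe_coe, jac_apply,
      LinearMap.prod_apply, Function.prod, LinearMap.fst_apply, LinearMap.snd_apply]
    simp only [Prod.mk.injEq]
    constructor
    · field_simp; ring
    · field_simp; ring
end

section
/- Consider the linear system on ℝ³ ⊕ ℝ³ given by the Heisenberg Jacobi equation in the standard coordinate frame. The solution with initial condition (p(0), x(0)) is (p(t), x(t)) = M(t)(p(0), x(0)), where the block of M(t) mapping x-initial conditions to x(t) (i.e. with p(0)=0, restricted to the first two x-coordinates) is [[ (1+cos(α₀t))/2, −sin(α₀t)/2 ],[ sin(α₀t)/2, (1+cos(α₀t))/2 ]]; its determinant equals (1+cos(α₀t))/2, hence it is invertible iff α₀t is not an odd multiple of π. -/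
open Matrix Real

/-- For the Heisenberg Jacobi equation in the standard coordinate frame, the
block of the fundamental matrix mapping the first two `x`-initial conditions to
the first two components of `x(t)` (for solutions with `p(0) = 0`) is
`[[(1+cos α₀t)/2, −sin(α₀t)/2],[sin(α₀t)/2, (1+cos α₀t)/2]]`; its determinant
is `(1+cos α₀t)/2`, so it is invertible iff `α₀t` is not an odd multiple of `π`. -/
theorem stmt_18 (x₀ y₀ u₀ v₀ α₀ : ℝ) (hα : α₀ ≠ 0)
    (ξ ξ' η η' : ℝ)
    (hξ : ξ = u₀ - α₀ * y₀ / 2) (hξ' : ξ' = u₀ + α₀ * y₀ / 2)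
    (hη : η = v₀ + α₀ * x₀ / 2) (hη' : η' = v₀ - α₀ * x₀ / 2)
    (A B : ℝ → Matrix (Fin 3) (Fin 3) ℝ) (R : Matrix (Fin 3) (Fin 3) ℝ)
    (hAm : ∀ t, A t = !![0, -α₀/2, 0;
      α₀/2, 0, 0;
      -(η' - 3 * (η * Real.cos (α₀*t) + ξ * Real.sin (α₀*t))) / 4,
        (ξ' - 3 * (ξ * Real.cos (α₀*t)) - η * Real.sin (α₀*t)) / 4, 0])
    (hR : R = !![-α₀^2/4, 0, 0; 0, -α₀^2/4, 0; 0, 0, 0])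
    (hBm : ∀ t, B t = !![1, 0,
        -(ξ' - ξ * Real.cos (α₀*t) + η * Real.sin (α₀*t)) / (2*α₀);
      0, 1, -(η' - η * Real.cos (α₀*t) - ξ * Real.sin (α₀*t)) / (2*α₀);
      -(ξ' - ξ * Real.cos (α₀*t) + η * Real.sin (α₀*t)) / (2*α₀),
        -(η' - η * Real.cos (α₀*t) - ξ * Real.sin (α₀*t)) / (2*α₀),
        (4 * (u₀^2 + v₀^2) * (1 - Real.cos (α₀*t))
          + α₀^2 * (x₀^2 + y₀^2) * (1 + Real.cos (α₀*t))
          + 4 * α₀ * (x₀*u₀ + y₀*v₀) * Real.sin (α₀*t)) / (8*α₀^2)])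
    (p x : ℝ → Fin 3 → ℝ)
    (hp : ∀ (t : ℝ) (i : Fin 3), HasDerivAt (fun s => p s i)
      (((-(A t)ᵀ).mulVec (p t) + R.mulVec (x t)) i) t)
    (hx : ∀ (t : ℝ) (i : Fin 3), HasDerivAt (fun s => x s i)
      (((B t).mulVec (p t) + (A t).mulVec (x t)) i) t)
    (hp0 : p 0 = 0) :
    ∀ t : ℝ,
      x t 0 = ((1 + Real.cos (α₀*t))/2) * x 0 0 + (-(Real.sin (α₀*t))/2) * x 0 1 ∧
      x t 1 = (Real.sin (α₀*t)/2) * x 0 0 + ((1 + Real.cos (α₀*t))/2) * x 0 1 ∧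
      Matrix.det !![(1 + Real.cos (α₀*t))/2, -(Real.sin (α₀*t))/2;
        Real.sin (α₀*t)/2, (1 + Real.cos (α₀*t))/2] = (1 + Real.cos (α₀*t))/2 ∧
      (IsUnit !![(1 + Real.cos (α₀*t))/2, -(Real.sin (α₀*t))/2;
          Real.sin (α₀*t)/2, (1 + Real.cos (α₀*t))/2] ↔
        ¬ ∃ k : ℤ, α₀ * t = (2 * (k:ℝ) + 1) * Real.pi) := by
  have keyP : ∀ t i, ((-(A t)ᵀ).mulVec (p t) + R.mulVec (x t)) i
      = -((A t) 0 i * p t 0 + (A t) 1 i * p t 1 + (A t) 2 i * p t 2)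
        + (R i 0 * x t 0 + R i 1 * x t 1 + R i 2 * x t 2) := by
    intro t i
    simp [Matrix.mulVec, dotProduct, Fin.sum_univ_three, Matrix.transpose_apply,
      Matrix.neg_apply]
  have keyX : ∀ t i, ((B t).mulVec (p t) + (A t).mulVec (x t)) i
      = (B t i 0 * p t 0 + B t i 1 * p t 1 + B t i 2 * p t 2)
        + ((A t) i 0 * x t 0 + (A t) i 1 * x t 1 + (A t) i 2 * x t 2) := by
    intro t i
    simp [Matrix.mulVec, dotProduct, Fin.sum_univ_three]
  -- p₃ is constant, hence zero
  have hp3d : ∀ t, HasDerivAt (fun s => p s 2) 0 t := by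
    intro t
    have h := hp t 2
    rw [keyP t 2, hAm t, hR] at h
    simpa [Matrix.vecHead, Matrix.vecTail] using h
  have hp3 : ∀ t, p t 2 = 0 := by
    intro t
    have hc := is_const_of_deriv_eq_zero (f := fun s => p s 2)
      (fun s => (hp3d s).differentiableAt) (fun s => (hp3d s).deriv) t 0
    simpa [hp0] using hc
  -- simplified equations for the first two components
  have hP1 : ∀ t, HasDerivAt (fun s => p s 0)
      (-(α₀/2) * p t 1 - (α₀/2)^2 * x t 0) t := by
    intro t
    have h := hp t 0
    rw [keyP t 0, hAm t, hR, hp3 t] at h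
    convert h using 1
    simp [Matrix.vecHead, Matrix.vecTail]
    try ring
  have hP2 : ∀ t, HasDerivAt (fun s => p s 1)
      ((α₀/2) * p t 0 - (α₀/2)^2 * x t 1) t := by
    intro t
    have h := hp t 1
    rw [keyP t 1, hAm t, hR, hp3 t] at h
    convert h using 1
    simp [Matrix.vecHead, Matrix.vecTail]
    try ring
  have hX1 : ∀ t, HasDerivAt (fun s => x s 0)
      (p t 0 - (α₀/2) * x t 1) t := by
    intro t
    have h := hx t 0
    rw [keyX t 0, hAm t, hBm t, hp3 t] at h
    convert h using 1
    simp [Matrix.vecHead, Matrix.vecTail]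
    try ring
  have hX2 : ∀ t, HasDerivAt (fun s => x s 1)
      (p t 1 + (α₀/2) * x t 0) t := by
    intro t
    have h := hx t 1
    rw [keyX t 1, hAm t, hBm t, hp3 t] at h
    convert h using 1
    simp [Matrix.vecHead, Matrix.vecTail]
    try ring
  have hc : ∀ t : ℝ, HasDerivAt (fun s => Real.cos (α₀/2 * s))
      (-Real.sin (α₀/2 * t) * (α₀/2 * 1)) t :=
    fun t => ((hasDerivAt_id t).const_mul (α₀/2)).cos
  have hs : ∀ t : ℝ, HasDerivAt (fun s => Real.sin (α₀/2 * s))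
      (Real.cos (α₀/2 * t) * (α₀/2 * 1)) t :=
    fun t => ((hasDerivAt_id t).const_mul (α₀/2)).sin
  -- the four conserved quantities
  have hG1 : ∀ t : ℝ, HasDerivAt (fun s =>
      Real.cos (α₀/2*s) * Real.cos (α₀/2*s) * p s 0
      + Real.sin (α₀/2*s) * Real.cos (α₀/2*s) * p s 1
      + (α₀/2 * (Real.sin (α₀/2*s) * Real.cos (α₀/2*s) * x s 0)
      + α₀/2 * (Real.sin (α₀/2*s) * Real.sin (α₀/2*s) * x s 1))) 0 t := by
    intro t
    have H := ((((hc t).mul (hc t)).mul (hP1 t)).add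
        (((hs t).mul (hc t)).mul (hP2 t))).add
      (((((hs t).mul (hc t)).mul (hX1 t)).const_mul (α₀/2)).add
        ((((hs t).mul (hs t)).mul (hX2 t)).const_mul (α₀/2)))
    exact H.congr_deriv (by simp only [Pi.mul_apply]; ring)
  have hG2 : ∀ t : ℝ, HasDerivAt (fun s =>
      -(Real.sin (α₀/2*s) * Real.cos (α₀/2*s) * p s 0)
      + Real.cos (α₀/2*s) * Real.cos (α₀/2*s) * p s 1
      + (-(α₀/2 * (Real.sin (α₀/2*s) * Real.sin (α₀/2*s) * x s 0))
      + α₀/2 * (Real.sin (α₀/2*s) * Real.cos (α₀/2*s) * x s 1))) 0 t := by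
    intro t
    have H := (((((hs t).mul (hc t)).mul (hP1 t)).neg).add
        (((hc t).mul (hc t)).mul (hP2 t))).add
      ((((((hs t).mul (hs t)).mul (hX1 t)).const_mul (α₀/2)).neg).add
        ((((hs t).mul (hc t)).mul (hX2 t)).const_mul (α₀/2)))
    exact H.congr_deriv (by simp only [Pi.mul_apply]; ring)
  have hG3 : ∀ t : ℝ, HasDerivAt (fun s =>
      -(Real.sin (α₀/2*s) * Real.cos (α₀/2*s) * p s 0)
      + -(Real.sin (α₀/2*s) * Real.sin (α₀/2*s) * p s 1)
      + (α₀/2 * (Real.cos (α₀/2*s) * Real.cos (α₀/2*s) * x s 0)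
      + α₀/2 * (Real.sin (α₀/2*s) * Real.cos (α₀/2*s) * x s 1))) 0 t := by
    intro t
    have H := (((((hs t).mul (hc t)).mul (hP1 t)).neg).add
        ((((hs t).mul (hs t)).mul (hP2 t)).neg)).add
      (((((hc t).mul (hc t)).mul (hX1 t)).const_mul (α₀/2)).add
        ((((hs t).mul (hc t)).mul (hX2 t)).const_mul (α₀/2)))
    exact H.congr_deriv (by simp only [Pi.mul_apply]; ring)
  have hG4 : ∀ t : ℝ, HasDerivAt (fun s =>
      Real.sin (α₀/2*s) * Real.sin (α₀/2*s) * p s 0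
      + -(Real.sin (α₀/2*s) * Real.cos (α₀/2*s) * p s 1)
      + (-(α₀/2 * (Real.sin (α₀/2*s) * Real.cos (α₀/2*s) * x s 0))
      + α₀/2 * (Real.cos (α₀/2*s) * Real.cos (α₀/2*s) * x s 1))) 0 t := by
    intro t
    have H := ((((hs t).mul (hs t)).mul (hP1 t)).add
        ((((hs t).mul (hc t)).mul (hP2 t)).neg)).add
      ((((((hs t).mul (hc t)).mul (hX1 t)).const_mul (α₀/2)).neg).add
        ((((hc t).mul (hc t)).mul (hX2 t)).const_mul (α₀/2)))
    exact H.congr_deriv (by simp only [Pi.mul_apply]; ring)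
  intro t
  -- the conserved quantities evaluated at t and 0
  have E1 : Real.cos (α₀/2*t) * Real.cos (α₀/2*t) * p t 0
      + Real.sin (α₀/2*t) * Real.cos (α₀/2*t) * p t 1
      + (α₀/2 * (Real.sin (α₀/2*t) * Real.cos (α₀/2*t) * x t 0)
      + α₀/2 * (Real.sin (α₀/2*t) * Real.sin (α₀/2*t) * x t 1)) = 0 := by
    have hc1 := is_const_of_deriv_eq_zero
      (fun s => (hG1 s).differentiableAt) (fun s => (hG1 s).deriv) t 0
    simpa [hp0] using hc1
  have E2 : -(Real.sin (α₀/2*t) * Real.cos (α₀/2*t) * p t 0)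
      + Real.cos (α₀/2*t) * Real.cos (α₀/2*t) * p t 1
      + (-(α₀/2 * (Real.sin (α₀/2*t) * Real.sin (α₀/2*t) * x t 0))
      + α₀/2 * (Real.sin (α₀/2*t) * Real.cos (α₀/2*t) * x t 1)) = 0 := by
    have hc1 := is_const_of_deriv_eq_zero
      (fun s => (hG2 s).differentiableAt) (fun s => (hG2 s).deriv) t 0
    simpa [hp0] using hc1
  have E3 : -(Real.sin (α₀/2*t) * Real.cos (α₀/2*t) * p t 0)
      + -(Real.sin (α₀/2*t) * Real.sin (α₀/2*t) * p t 1)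
      + (α₀/2 * (Real.cos (α₀/2*t) * Real.cos (α₀/2*t) * x t 0)
      + α₀/2 * (Real.sin (α₀/2*t) * Real.cos (α₀/2*t) * x t 1))
      = α₀/2 * x 0 0 := by
    have hc1 := is_const_of_deriv_eq_zero
      (fun s => (hG3 s).differentiableAt) (fun s => (hG3 s).deriv) t 0
    simpa [hp0] using hc1
  have E4 : Real.sin (α₀/2*t) * Real.sin (α₀/2*t) * p t 0
      + -(Real.sin (α₀/2*t) * Real.cos (α₀/2*t) * p t 1)
      + (-(α₀/2 * (Real.sin (α₀/2*t) * Real.cos (α₀/2*t) * x t 0))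
      + α₀/2 * (Real.cos (α₀/2*t) * Real.cos (α₀/2*t) * x t 1))
      = α₀/2 * x 0 1 := by
    have hc1 := is_const_of_deriv_eq_zero
      (fun s => (hG4 s).differentiableAt) (fun s => (hG4 s).deriv) t 0
    simpa [hp0] using hc1
  have hpy := Real.sin_sq_add_cos_sq (α₀/2*t)
  have ha2 : (α₀/2) ≠ 0 := div_ne_zero hα two_ne_zero
  have hrw : α₀ * t = 2 * (α₀/2*t) := by ring
  have hx0 : x t 0 = Real.cos (α₀/2*t) * Real.cos (α₀/2*t) * x 0 0
      - Real.sin (α₀/2*t) * Real.cos (α₀/2*t) * x 0 1 := by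
    have key : (α₀/2) * x t 0 = (α₀/2) * (Real.cos (α₀/2*t) * Real.cos (α₀/2*t) * x 0 0
        - Real.sin (α₀/2*t) * Real.cos (α₀/2*t) * x 0 1) := by
      linear_combination (Real.cos (α₀/2*t) * Real.sin (α₀/2*t)) * E1
        - (Real.sin (α₀/2*t))^2 * E2 + (Real.cos (α₀/2*t))^2 * E3
        - (Real.cos (α₀/2*t) * Real.sin (α₀/2*t)) * E4
        - (α₀/2) * (x t 0) * (1 + (Real.sin (α₀/2*t))^2 + (Real.cos (α₀/2*t))^2) * hpy
    exact mul_left_cancel₀ ha2 key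
  have hx1 : x t 1 = Real.sin (α₀/2*t) * Real.cos (α₀/2*t) * x 0 0
      + Real.cos (α₀/2*t) * Real.cos (α₀/2*t) * x 0 1 := by
    have key : (α₀/2) * x t 1 = (α₀/2) * (Real.sin (α₀/2*t) * Real.cos (α₀/2*t) * x 0 0
        + Real.cos (α₀/2*t) * Real.cos (α₀/2*t) * x 0 1) := by
      linear_combination (Real.sin (α₀/2*t))^2 * E1
        + (Real.sin (α₀/2*t) * Real.cos (α₀/2*t)) * E2
        + (Real.sin (α₀/2*t) * Real.cos (α₀/2*t)) * E3 + (Real.cos (α₀/2*t))^2 * E4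
        - (α₀/2) * (x t 1) * (1 + (Real.sin (α₀/2*t))^2 + (Real.cos (α₀/2*t))^2) * hpy
    exact mul_left_cancel₀ ha2 key
  have hdet : Matrix.det !![(1 + Real.cos (α₀*t))/2, -(Real.sin (α₀*t))/2;
      Real.sin (α₀*t)/2, (1 + Real.cos (α₀*t))/2] = (1 + Real.cos (α₀*t))/2 := by
    rw [Matrix.det_fin_two_of]
    linear_combination (1/4 : ℝ) * Real.sin_sq_add_cos_sq (α₀*t)
  refine ⟨?_, ?_, hdet, ?_⟩
  · rw [hrw, Real.cos_two_mul, Real.sin_two_mul, hx0]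
    ring
  · rw [hrw, Real.cos_two_mul, Real.sin_two_mul, hx1]
    ring
  · rw [Matrix.isUnit_iff_isUnit_det, hdet, isUnit_iff_ne_zero]
    constructor
    · rintro h ⟨k, hk⟩
      apply h
      have : Real.cos (α₀*t) = -1 := by
        rw [hk]
        have : (2 * (k:ℝ) + 1) * π = π + k * (2*π) := by ring
        rw [this, Real.cos_eq_neg_one_iff]
        exact ⟨k, rfl⟩
      rw [this]; ring
    · intro h hdet0
      apply h
      have hcos : Real.cos (α₀*t) = -1 := by linarith [hdet0]
      obtain ⟨k, hk⟩ := Real.cos_eq_neg_one_iff.mp hcos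
      exact ⟨k, by rw [← hk]; ring⟩
end
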